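/- arXiv:1804.07702 — 7 statements merged into one kernel-verified Lean document; each statement's English description precedes it below -/
import Mathlib

section
/- The bracket defined below on 𝔥 = 𝔱 ⊕ 𝔥₁ is well defined (it respects the relations X_{zα̃} = z·X_{α̃}), is alternating, and satisfies the Jacobi identity; thus 𝔥 is a Lie algebra over R. -/
set_option linter.unusedSectionVars false
set_option linter.unusedVariables false
set_option linter.unreachableTactic false
set_option linter.unusedTactic false
set_option maxHeartbeats 1000000


open scoped TensorProduct

section Infra

variable {Λ : Type} [AddCommGroup Λ]
    {B : Λ → Λ → ℤ}
    (hB_add_left : ∀ x y z : Λ, B (x + y) z = B x z + B y z)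
    (hB_add_right : ∀ x y z : Λ, B x (y + z) = B x y + B x z)
    (hB_symm : ∀ x y : Λ, B x y = B y x)
    (hB_pos : ∀ x : Λ, x ≠ 0 → 0 < B x x)
    {Φ : Set Λ}
    (hΦ : Φ = {α : Λ | B α α = 2})
    (h_laced : ∀ α ∈ Φ, ∀ β ∈ Φ, ((α + β) ∈ Φ ↔ B α β = -1))
    {w : Λ →+ Λ}
    (hwB : ∀ x y : Λ, B (w x) (w y) = B x y)
    (hw_ell : ∀ γ : Λ, w (w γ) + w γ + γ = 0)

section Blem

include hB_add_right in
lemma B_zero_right (x : Λ) : B x 0 = 0 := by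
  have := hB_add_right x 0 0; simp at this; omega

include hB_add_right in
lemma B_neg_right (x y : Λ) : B x (-y) = - B x y := by
  have := hB_add_right x y (-y); simp [B_zero_right hB_add_right] at this; omega

include hB_add_right in
lemma B_sub_right (x y z : Λ) : B x (y - z) = B x y - B x z := by
  rw [sub_eq_add_neg, hB_add_right, B_neg_right hB_add_right]; ring

include hB_add_left in
lemma B_zero_left (x : Λ) : B 0 x = 0 := by
  have := hB_add_left 0 0 x; simp at this; omega

include hB_add_left in
lemma B_neg_left (x y : Λ) : B (-x) y = - B x y := by
  have := hB_add_left x (-x) y; simp [B_zero_left hB_add_left] at this; omega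

include hB_add_left in
lemma B_sub_left (x y z : Λ) : B (x - y) z = B x z - B y z := by
  rw [sub_eq_add_neg, hB_add_left, B_neg_left hB_add_left]; ring

include hw_ell in
lemma w_cube (x : Λ) : w (w (w x)) = x := by
  have h1 := hw_ell (w x)
  have h2 := hw_ell x
  have : w (w (w x)) = - w (w x) - w x := by linear_combination (norm := abel) h1
  rw [this]; linear_combination (norm := abel) - h2

include hwB hw_ell in
lemma B_w_adj (x y : Λ) : B (w x) y = B x (w (w y)) := by
  conv_lhs => rw [← w_cube hw_ell y]
  rw [hwB]

include hB_add_right hwB hw_ell in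
lemma B_w_shift (x y : Λ) : B x (w y) + B x (w (w y)) + B x y = 0 := by
  have h := hw_ell y
  have : B x (w (w y) + w y + y) = B x (w (w y)) + B x (w y) + B x y := by
    rw [hB_add_right, hB_add_right]
  rw [h] at this
  rw [B_zero_right hB_add_right] at this
  omega

include hB_add_right hB_symm hwB hw_ell in
lemma B_p_sym (x y : Λ) : B x (w y) + B y (w x) + B x y = 0 := by
  have h := B_w_shift hB_add_right hwB hw_ell x y
  have h2 : B x (w (w y)) = B y (w x) := by
    rw [← B_w_adj hwB hw_ell, hB_symm]
  omega

include hB_add_right hB_symm hwB hw_ell in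
lemma B_self_w (x : Λ) : 2 * B x (w x) = - B x x := by
  have := B_p_sym hB_add_right hB_symm hwB hw_ell x x; omega

include hB_add_right hB_symm hwB hw_ell hΦ in
lemma root_w_self {α : Λ} (hα : α ∈ Φ) : B α (w α) = -1 := by
  rw [hΦ] at hα
  have := B_self_w hB_add_right hB_symm hwB hw_ell α
  simp only [Set.mem_setOf_eq] at hα
  omega

include hΦ in
lemma root_norm {α : Λ} (hα : α ∈ Φ) : B α α = 2 := by
  rw [hΦ] at hα; exact hα

include hB_pos in
lemma B_self_eq_zero {x : Λ} (h : B x x = 0) : x = 0 := by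
  by_contra hx
  have := hB_pos x hx; omega

include hB_add_left hB_add_right hB_symm hB_pos hΦ in
lemma root_pair_bounds {α β : Λ} (hα : α ∈ Φ) (hβ : β ∈ Φ) :
    -2 ≤ B α β ∧ B α β ≤ 2 := by
  have h1 : 0 ≤ B (α + β) (α + β) := by
    rcases eq_or_ne (α + β) 0 with h | h
    · rw [h, B_zero_left hB_add_left]
    · exact le_of_lt (hB_pos _ h)
  have h2 : 0 ≤ B (α - β) (α - β) := by
    rcases eq_or_ne (α - β) 0 with h | h
    · rw [h, B_zero_left hB_add_left]
    · exact le_of_lt (hB_pos _ h)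
  rw [hB_add_left, hB_add_right, hB_add_right] at h1
  rw [B_sub_left hB_add_left, B_sub_right hB_add_right, B_sub_right hB_add_right] at h2
  have ha := root_norm hΦ hα
  have hb := root_norm hΦ hβ
  have hs := hB_symm α β
  omega

include hB_add_left hB_add_right hB_symm hB_pos hΦ in
lemma root_pair_neg_two {α β : Λ} (hα : α ∈ Φ) (hβ : β ∈ Φ) :
    α + β = 0 ↔ B α β = -2 := by
  constructor
  · intro h
    have hβ' : β = -α := by linear_combination (norm := abel) h
    rw [hβ', B_neg_right hB_add_right, root_norm hΦ hα]
  · intro h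
    apply B_self_eq_zero hB_pos (x := α + β)
    rw [hB_add_left, hB_add_right, hB_add_right, root_norm hΦ hα, root_norm hΦ hβ,
      hB_symm β α]
    omega

include hB_add_left hB_add_right hB_symm hB_pos hΦ in
lemma root_pair_two {α β : Λ} (hα : α ∈ Φ) (hβ : β ∈ Φ) :
    α = β ↔ B α β = 2 := by
  constructor
  · intro h; rw [h]; exact root_norm hΦ hβ
  · intro h
    have h0 : α - β = 0 := by
      apply B_self_eq_zero hB_pos
      rw [B_sub_left hB_add_left, B_sub_right hB_add_right, B_sub_right hB_add_right,
        root_norm hΦ hα, root_norm hΦ hβ, hB_symm β α]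
      omega
    linear_combination (norm := abel) h0

end Blem

end Infra
section UnitsLem

variable {R : Type} [CommRing R] {ζ : Rˣ} (hζ : 1 + (ζ : R) + (ζ : R) ^ 2 = 0)

lemma unit_zpow_congr (u : Rˣ) (k : ℕ) (hu : u ^ k = 1) {m n : ℤ} (h : (k : ℤ) ∣ m - n) :
    u ^ m = u ^ n := by
  obtain ⟨d, hd⟩ := h
  have hm : m = n + (k : ℤ) * d := by omega
  rw [hm, zpow_add, zpow_mul, zpow_natCast, hu, one_zpow, mul_one]

include hζ in
lemma zeta_cube : ζ ^ (3 : ℕ) = 1 := by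
  ext
  push_cast
  linear_combination ((ζ : R) - 1) * hζ

include hζ in
lemma zeta_zpow_congr {m n : ℤ} (h : (3:ℤ) ∣ m - n) : ζ ^ m = ζ ^ n :=
  unit_zpow_congr ζ 3 (zeta_cube hζ) h

lemma neg_one_zpow_congr {m n : ℤ} (h : (2:ℤ) ∣ m - n) : (-1 : Rˣ) ^ m = (-1 : Rˣ) ^ n :=
  unit_zpow_congr (-1) 2 (by simp) h

include hζ in
/-- master scalar congruence -/
lemma eps_congr {m n m' n' : ℤ} (h2 : (2:ℤ) ∣ m - m') (h3 : (3:ℤ) ∣ n - n') :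
    (-1 : Rˣ) ^ m * ζ ^ n = (-1 : Rˣ) ^ m' * ζ ^ n' := by
  rw [neg_one_zpow_congr h2, zeta_zpow_congr hζ h3]

lemma neg_one_zpow_succ (m : ℤ) : (-1 : Rˣ) ^ (m + 1) = -((-1 : Rˣ) ^ m) := by
  rw [zpow_add, zpow_one, mul_neg_one]

end UnitsLem

section GroupLem

variable {Λ : Type} [AddCommGroup Λ]
    {R : Type} [CommRing R] {ζ : Rˣ} (hζ : 1 + (ζ : R) + (ζ : R) ^ 2 = 0)
    {Λt : Type} [Group Λt]
    {π : Λt → Λ}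
    (hπ_mul : ∀ a b : Λt, π (a * b) = π a + π b)
    {c : Λt} (hc_ker : π c = 0)
    (hc_central : ∀ g : Λt, c * g = g * c)
    (hc_order : c ^ 3 = 1)
    (h_ker : ∀ g : Λt, π g = 0 → g = 1 ∨ g = c ∨ g = c ^ 2)
    {ν : Λt → R}
    (hν_one : ν 1 = 1) (hν_c : ν c = (ζ : R)) (hν_c2 : ν (c ^ 2) = (ζ : R) ^ 2)

include hc_central h_ker in
lemma ker_central {z : Λt} (hz : π z = 0) (g : Λt) : z * g = g * z := by
  rcases h_ker z hz with h | h | h <;> subst h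
  · simp
  · exact hc_central g
  · rw [pow_two, mul_assoc, hc_central, ← mul_assoc, hc_central, mul_assoc]

include hc_order in
lemma c_zpow_congr {m n : ℤ} (h : (3:ℤ) ∣ m - n) : c ^ m = c ^ n := by
  obtain ⟨d, hd⟩ := h
  have hm : m = n + (3 : ℤ) * d := by omega
  rw [hm, zpow_add, zpow_mul]
  have h3 : (c : Λt) ^ (3 : ℤ) = 1 := by
    rw [show ((3:ℤ)) = ((3:ℕ):ℤ) by norm_num, zpow_natCast, hc_order]
  rw [h3, one_zpow, mul_one]

include hζ hc_order hν_one hν_c hν_c2 in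
lemma nu_c_zpow (n : ℤ) : ν (c ^ n) = ((ζ ^ n : Rˣ) : R) := by
  have h3 : n % 3 = 0 ∨ n % 3 = 1 ∨ n % 3 = 2 := by omega
  have hc : c ^ n = c ^ (n % 3) := c_zpow_congr hc_order (by omega)
  have hz : (ζ : Rˣ) ^ n = ζ ^ (n % 3) := zeta_zpow_congr hζ (by omega)
  rw [hc, hz]
  rcases h3 with h | h | h <;> rw [h]
  · simpa using hν_one
  · simpa using hν_c
  · rw [show ((2:ℤ)) = ((2:ℕ):ℤ) by norm_num, zpow_natCast, zpow_natCast]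
    simpa using hν_c2

include h_ker in
lemma ker_exists_pow {z : Λt} (hz : π z = 0) :
    ∃ n : ℤ, z = c ^ n := by
  rcases h_ker z hz with h | h | h
  · exact ⟨0, by simp [h]⟩
  · exact ⟨1, by simp [h]⟩
  · exact ⟨2, by rw [h, zpow_two, pow_two]⟩

include hζ hc_order h_ker hν_one hν_c hν_c2 in
lemma nu_mul_ker {y z : Λt} (hy : π y = 0) (hz : π z = 0) :
    ν (y * z) = ν y * ν z := by
  obtain ⟨m, hm⟩ := ker_exists_pow h_ker hy
  obtain ⟨n, hn⟩ := ker_exists_pow h_ker hz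
  subst hm hn
  rw [← zpow_add, nu_c_zpow hζ hc_order hν_one hν_c hν_c2,
    nu_c_zpow hζ hc_order hν_one hν_c hν_c2, nu_c_zpow hζ hc_order hν_one hν_c hν_c2,
    zpow_add]
  push_cast
  ring

end GroupLem
section UnitsLem2

variable {R : Type} [CommRing R] {ζ : Rˣ} (hζ : 1 + (ζ : R) + (ζ : R) ^ 2 = 0)

lemma eps_mul (a b cc d : ℤ) :
    ((-1 : Rˣ) ^ a * ζ ^ b) * ((-1 : Rˣ) ^ cc * ζ ^ d) =
      (-1 : Rˣ) ^ (a + cc) * ζ ^ (b + d) := by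
  rw [zpow_add, zpow_add, mul_mul_mul_comm]

include hζ in
lemma eps_congr_neg {m n m' n' : ℤ} (h2 : (2:ℤ) ∣ m - (m' + 1)) (h3 : (3:ℤ) ∣ n - n') :
    (-1 : Rˣ) ^ m * ζ ^ n = -((-1 : Rˣ) ^ m' * ζ ^ n') := by
  rw [eps_congr hζ (m' := m' + 1) (n' := n') h2 h3, neg_one_zpow_succ, neg_mul]

end UnitsLem2
structure Ctx : Type 1 where
  Λ : Type
  [iΛ : AddCommGroup Λ]
  B : Λ → Λ → ℤ
  hB_add_left : ∀ x y z : Λ, B (x + y) z = B x z + B y z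
  hB_add_right : ∀ x y z : Λ, B x (y + z) = B x y + B x z
  hB_symm : ∀ x y : Λ, B x y = B y x
  hB_pos : ∀ x : Λ, x ≠ 0 → 0 < B x x
  Φ : Set Λ
  hΦ : Φ = {α : Λ | B α α = 2}
  h_laced : ∀ α ∈ Φ, ∀ β ∈ Φ, ((α + β) ∈ Φ ↔ B α β = -1)
  w : Λ →+ Λ
  hwB : ∀ x y : Λ, B (w x) (w y) = B x y
  hw_ell : ∀ γ : Λ, w (w γ) + w γ + γ = 0
  R : Type
  [iR : CommRing R]
  h2 : IsUnit (2 : R)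
  ζ : Rˣ
  hζ : 1 + (ζ : R) + (ζ : R) ^ 2 = 0
  Λt : Type
  [iG : Group Λt]
  π : Λt → Λ
  hπ_mul : ∀ a b : Λt, π (a * b) = π a + π b
  c : Λt
  hc_ker : π c = 0
  hc_central : ∀ g : Λt, c * g = g * c
  hc_order : c ^ 3 = 1
  h_ker : ∀ g : Λt, π g = 0 → g = 1 ∨ g = c ∨ g = c ^ 2
  ν : Λt → R
  hν_one : ν 1 = 1
  hν_c : ν c = (ζ : R)
  hν_c2 : ν (c ^ 2) = (ζ : R) ^ 2
  h_comm : ∀ a b : Λt, a * b * a⁻¹ * b⁻¹ = c ^ (B (π a - w (π a)) (π b))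

attribute [instance] Ctx.iΛ Ctx.iR Ctx.iG

namespace Ctx

variable (C : Ctx)

abbrev Sg := {g : C.Λt // C.π g ∈ C.Φ}
abbrev Fr := C.Sg →₀ C.R

noncomputable def Rel : Submodule C.R C.Fr := Submodule.span C.R
  {v : {g : C.Λt // C.π g ∈ C.Φ} →₀ C.R |
    ∃ (z g : C.Λt) (hz : C.π z = 0) (hg : C.π g ∈ C.Φ),
      v = Finsupp.single ⟨z * g, by rw [C.hπ_mul, hz, zero_add]; exact hg⟩ (1 : C.R) -
          C.ν z • Finsupp.single ⟨g, hg⟩ (1 : C.R)}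

abbrev Qt := C.Fr ⧸ C.Rel

noncomputable def XX (g : C.Λt) (hg : C.π g ∈ C.Φ) : C.Qt :=
  Submodule.Quotient.mk (Finsupp.single ⟨g, hg⟩ (1 : C.R))

abbrev Tt := C.R ⊗[ℤ] (C.Λ →+ ℤ)

noncomputable def chk : C.Λ → C.Tt := fun α =>
  (1 : C.R) ⊗ₜ[ℤ] (AddMonoidHom.mk' (fun x => C.B α x) (fun x y => C.hB_add_right α x y))

abbrev Ht := C.Tt × C.Qt

def eps (g h : C.Λt) : C.Rˣ :=
  (-1 : C.Rˣ) ^ (C.B (C.π g) (C.w (C.π h))) *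
    C.ζ ^ (C.B (C.π g - C.w (C.π g)) (C.π h))

open Classical in
noncomputable def pval (g h : C.Λt) (hg : C.π g ∈ C.Φ) (hh : C.π h ∈ C.Φ) : C.Ht :=
  if _h0 : C.π g + C.π h = 0 then (-(C.ν (g * h))) • (C.chk (C.π g), (0 : C.Qt))
  else if hs : C.π g + C.π h ∈ C.Φ then
    ((C.eps g h : C.R)) • ((0 : C.Tt), C.XX (g * h) (by rw [C.hπ_mul]; exact hs))
  else 0

lemma root_ne_zero {α : C.Λ} (hα : α ∈ C.Φ) : α ≠ 0 := by
  intro h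
  rw [C.hΦ] at hα
  simp only [Set.mem_setOf_eq, h] at hα
  rw [B_zero_left C.hB_add_left] at hα
  omega

lemma pval_zero {g h : C.Λt} (hg : C.π g ∈ C.Φ) (hh : C.π h ∈ C.Φ)
    (h0 : C.π g + C.π h = 0) :
    C.pval g h hg hh = (-(C.ν (g * h))) • (C.chk (C.π g), (0 : C.Qt)) := by
  rw [pval, dif_pos h0]

lemma pval_root {g h : C.Λt} (hg : C.π g ∈ C.Φ) (hh : C.π h ∈ C.Φ)
    (hs : C.π g + C.π h ∈ C.Φ) :
    C.pval g h hg hh =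
      ((C.eps g h : C.R)) • ((0 : C.Tt), C.XX (g * h) (by rw [C.hπ_mul]; exact hs)) := by
  have h0 : ¬ (C.π g + C.π h = 0) := fun h' => C.root_ne_zero hs h'
  rw [pval, dif_neg h0, dif_pos hs]

lemma pval_none {g h : C.Λt} (hg : C.π g ∈ C.Φ) (hh : C.π h ∈ C.Φ)
    (h0 : ¬ (C.π g + C.π h = 0)) (hs : ¬ (C.π g + C.π h ∈ C.Φ)) :
    C.pval g h hg hh = 0 := by
  rw [pval, dif_neg h0, dif_neg hs]

lemma Q_ext {M : Type} [AddCommGroup M] [Module C.R M] {φ ψ : C.Qt →ₗ[C.R] M}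
    (h : ∀ (g : C.Λt) (hg : C.π g ∈ C.Φ), φ (C.XX g hg) = ψ (C.XX g hg)) : φ = ψ := by
  refine Submodule.linearMap_qext _ ?_
  refine Finsupp.lhom_ext' (fun s => ?_)
  ext
  simpa [XX] using h s.1 s.2

lemma X_rescale {z m : C.Λt} (hz : C.π z = 0) (hm : C.π m ∈ C.Φ)
    (hzm : C.π (z * m) ∈ C.Φ) :
    C.XX (z * m) hzm = C.ν z • C.XX m hm := by
  rw [XX, XX, ← Submodule.Quotient.mk_smul, ← sub_eq_zero, ← Submodule.Quotient.mk_sub,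
    Submodule.Quotient.mk_eq_zero]
  apply Submodule.subset_span
  exact ⟨z, m, hz, hm, rfl⟩

lemma lift_single_one {M : Type} [AddCommGroup M] [Module C.R M] (v : C.Sg → M) (s : C.Sg) :
    Finsupp.lift M C.R C.Sg v (Finsupp.single s (1 : C.R)) = v s := by
  simp [Finsupp.lift_apply, Finsupp.sum_single_index]
lemma nu_mul {y z : C.Λt} (hy : C.π y = 0) (hz : C.π z = 0) :
    C.ν (y * z) = C.ν y * C.ν z :=
  nu_mul_ker C.hζ C.hc_order C.h_ker C.hν_one C.hν_c C.hν_c2 hy hz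

lemma kcentral {z : C.Λt} (hz : C.π z = 0) (g : C.Λt) : z * g = g * z :=
  ker_central C.hc_central C.h_ker hz g

lemma nu_c_pow (n : ℤ) : C.ν (C.c ^ n) = ((C.ζ ^ n : C.Rˣ) : C.R) :=
  nu_c_zpow C.hζ C.hc_order C.hν_one C.hν_c C.hν_c2 n

/-- commutation rule for lifts -/
lemma comm_rule (a b : C.Λt) :
    a * b = C.c ^ (C.B (C.π a - C.w (C.π a)) (C.π b)) * (b * a) := by
  have h := C.h_comm a b
  calc a * b = (a * b * a⁻¹ * b⁻¹) * (b * a) := by group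
  _ = _ := by rw [h]

lemma pi_mul3 (a b d : C.Λt) : C.π (a * b * d) = C.π a + C.π b + C.π d := by
  rw [C.hπ_mul, C.hπ_mul]

lemma XX_congr {a b : C.Λt} (hab : a = b) (ha : C.π a ∈ C.Φ) (hb : C.π b ∈ C.Φ) :
    C.XX a ha = C.XX b hb := by subst hab; rfl

-- rescaling lemmas for pval
lemma pval_rescale_left {z g h : C.Λt} (hz : C.π z = 0) (h1 : C.π (z * g) ∈ C.Φ)
    (hg : C.π g ∈ C.Φ) (hh : C.π h ∈ C.Φ) :
    C.pval (z * g) h h1 hh = C.ν z • C.pval g h hg hh := by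
  have hπ : C.π (z * g) = C.π g := by rw [C.hπ_mul, hz, zero_add]
  by_cases h0 : C.π g + C.π h = 0
  · rw [C.pval_zero hg hh h0, C.pval_zero h1 hh (by rw [hπ]; exact h0)]
    have hgh : C.π (g * h) = 0 := by rw [C.hπ_mul]; exact h0
    rw [mul_assoc, C.nu_mul hz hgh, hπ, smul_smul]
    congr 1
    ring
  · by_cases hs : C.π g + C.π h ∈ C.Φ
    · rw [C.pval_root hg hh hs, C.pval_root h1 hh (by rw [hπ]; exact hs)]
      have he : C.eps (z * g) h = C.eps g h := by
        simp only [eps, hπ]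
      have hX : C.XX (z * g * h) (by rw [C.hπ_mul, hπ]; exact hs) =
          C.ν z • C.XX (g * h) (by rw [C.hπ_mul]; exact hs) :=
        (C.XX_congr (by group) _ (by rw [C.hπ_mul, C.hπ_mul, hz, zero_add]; exact hs)).trans
          (C.X_rescale hz _ _)
      rw [he, hX, smul_comm]
      simp [Prod.smul_mk]
    · rw [C.pval_none hg hh h0 hs, C.pval_none h1 hh (by rw [hπ]; exact h0)
        (by rw [hπ]; exact hs), smul_zero]

lemma pval_rescale_right {z g h : C.Λt} (hz : C.π z = 0) (h1 : C.π (z * h) ∈ C.Φ)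
    (hg : C.π g ∈ C.Φ) (hh : C.π h ∈ C.Φ) :
    C.pval g (z * h) hg h1 = C.ν z • C.pval g h hg hh := by
  have hπ : C.π (z * h) = C.π h := by rw [C.hπ_mul, hz, zero_add]
  have hassoc : g * (z * h) = z * (g * h) := by
    rw [← mul_assoc, ← C.kcentral hz g, mul_assoc]
  by_cases h0 : C.π g + C.π h = 0
  · rw [C.pval_zero hg hh h0, C.pval_zero hg h1 (by rw [hπ]; exact h0)]
    have hgh : C.π (g * h) = 0 := by rw [C.hπ_mul]; exact h0
    rw [hassoc, C.nu_mul hz hgh, smul_smul]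
    congr 1
    ring
  · by_cases hs : C.π g + C.π h ∈ C.Φ
    · rw [C.pval_root hg hh hs, C.pval_root hg h1 (by rw [hπ]; exact hs)]
      have he : C.eps g (z * h) = C.eps g h := by
        simp only [eps, hπ]
      have hX : C.XX (g * (z * h)) (by rw [C.hπ_mul, hπ]; exact hs) =
          C.ν z • C.XX (g * h) (by rw [C.hπ_mul]; exact hs) :=
        (C.XX_congr hassoc _ (by rw [C.hπ_mul, C.hπ_mul, hz, zero_add]; exact hs)).trans
          (C.X_rescale hz _ _)
      rw [he, hX, smul_comm]
      simp [Prod.smul_mk]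
    · rw [C.pval_none hg hh h0 hs, C.pval_none hg h1 (by rw [hπ]; exact h0)
        (by rw [hπ]; exact hs), smul_zero]

-- the action of 𝔱 on Q
noncomputable def actFQ (f : C.Λ →+ ℤ) : C.Fr →ₗ[C.R] C.Qt :=
  Finsupp.lift C.Qt C.R C.Sg (fun s => ((f (C.π s.1) : ℤ) : C.R) • C.XX s.1 s.2)

noncomputable def actQ (f : C.Λ →+ ℤ) : C.Qt →ₗ[C.R] C.Qt :=
  Submodule.liftQ C.Rel (C.actFQ f) (id (α := C.Rel ≤ LinearMap.ker (C.actFQ f)) <| by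
    refine Submodule.span_le.mpr ?_
    rintro v ⟨z, g, hz, hg, rfl⟩
    have hπ : C.π (z * g) = C.π g := by rw [C.hπ_mul, hz, zero_add]
    simp only [SetLike.mem_coe, LinearMap.mem_ker, map_sub, map_smul, actFQ,
      C.lift_single_one]
    rw [hπ, C.X_rescale hz hg (by rw [C.hπ_mul, hz, zero_add]; exact hg)]
    rw [smul_comm ((f (C.π g) : ℤ) : C.R) (C.ν z) (C.XX g hg), sub_self])

lemma actQ_X (f : C.Λ →+ ℤ) (g : C.Λt) (hg : C.π g ∈ C.Φ) :
    C.actQ f (C.XX g hg) = ((f (C.π g) : ℤ) : C.R) • C.XX g hg := by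
  rw [actQ, XX, Submodule.liftQ_apply, actFQ, C.lift_single_one]
  rfl

noncomputable def actH : (C.Λ →+ ℤ) →+ (C.Qt →ₗ[C.R] C.Qt) :=
  AddMonoidHom.mk' (fun f => C.actQ f) (by
    intro f f'
    apply C.Q_ext
    intro g hg
    show C.actQ (f + f') (C.XX g hg) = C.actQ f (C.XX g hg) + C.actQ f' (C.XX g hg)
    rw [C.actQ_X, C.actQ_X, C.actQ_X, AddMonoidHom.add_apply]
    push_cast
    rw [add_smul])

noncomputable def act : C.Tt →ₗ[C.R] C.Qt →ₗ[C.R] C.Qt :=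
  TensorProduct.AlgebraTensorModule.lift
    (LinearMap.toSpanSingleton C.R _ C.actH.toIntLinearMap)

lemma act_tmul (r : C.R) (f : C.Λ →+ ℤ) (g : C.Λt) (hg : C.π g ∈ C.Φ) :
    C.act (r ⊗ₜ[ℤ] f) (C.XX g hg) = (r * ((f (C.π g) : ℤ) : C.R)) • C.XX g hg := by
  rw [act, TensorProduct.AlgebraTensorModule.lift_tmul]
  simp only [LinearMap.toSpanSingleton_apply, LinearMap.smul_apply]
  rw [show (C.actH.toIntLinearMap f : C.Qt →ₗ[C.R] C.Qt) = C.actQ f from rfl]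
  rw [C.actQ_X, smul_smul]

lemma act_chk (α : C.Λ) (g : C.Λt) (hg : C.π g ∈ C.Φ) :
    C.act (C.chk α) (C.XX g hg) = ((C.B α (C.π g) : ℤ) : C.R) • C.XX g hg := by
  rw [chk, C.act_tmul, one_mul]
  rfl

-- the bracket on Q × Q
noncomputable def pvInQ (s : C.Sg) : C.Qt →ₗ[C.R] C.Ht :=
  Submodule.liftQ C.Rel
    (Finsupp.lift C.Ht C.R C.Sg (fun s' => C.pval s.1 s'.1 s.2 s'.2)) (id (α := C.Rel ≤ LinearMap.ker (Finsupp.lift C.Ht C.R C.Sg (fun s' => C.pval s.1 s'.1 s.2 s'.2))) <| by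
      refine Submodule.span_le.mpr ?_
      rintro v ⟨z, m, hz, hm, rfl⟩
      simp only [SetLike.mem_coe, LinearMap.mem_ker, map_sub, map_smul, C.lift_single_one]
      rw [C.pval_rescale_right hz (by rw [C.hπ_mul, hz, zero_add]; exact hm) s.2 hm]
      rw [sub_self])

noncomputable def PQQ : C.Qt →ₗ[C.R] C.Qt →ₗ[C.R] C.Ht :=
  Submodule.liftQ C.Rel
    (Finsupp.lift (C.Qt →ₗ[C.R] C.Ht) C.R C.Sg (fun s => C.pvInQ s)) (id (α := C.Rel ≤ LinearMap.ker (Finsupp.lift (C.Qt →ₗ[C.R] C.Ht) C.R C.Sg (fun s => C.pvInQ s))) <| by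
      refine Submodule.span_le.mpr ?_
      rintro v ⟨z, m, hz, hm, rfl⟩
      simp only [SetLike.mem_coe, LinearMap.mem_ker, map_sub, map_smul, C.lift_single_one]
      rw [sub_eq_zero]
      apply C.Q_ext
      intro g hg
      simp only [LinearMap.smul_apply, pvInQ, XX, Submodule.liftQ_apply, C.lift_single_one]
      exact C.pval_rescale_left hz (by rw [C.hπ_mul, hz, zero_add]; exact hm) hm hg)

lemma PQQ_XX (g h : C.Λt) (hg : C.π g ∈ C.Φ) (hh : C.π h ∈ C.Φ) :
    C.PQQ (C.XX g hg) (C.XX h hh) = C.pval g h hg hh := by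
  rw [PQQ, XX, XX, Submodule.liftQ_apply, C.lift_single_one, pvInQ,
    Submodule.liftQ_apply, C.lift_single_one]

-- the full bracket
noncomputable def brH : C.Ht →ₗ[C.R] C.Ht →ₗ[C.R] C.Ht :=
  LinearMap.mk₂ C.R
    (fun x y => ((C.PQQ x.2 y.2).1, C.act x.1 y.2 - C.act y.1 x.2 + (C.PQQ x.2 y.2).2))
    (by
      intro m1 m2 n
      simp only [Prod.fst_add, Prod.snd_add, map_add, LinearMap.add_apply, Prod.mk_add_mk,
        Prod.ext_iff]
      exact ⟨trivial, by abel⟩)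
    (by
      intro r m n
      simp only [Prod.smul_fst, Prod.smul_snd, map_smul, LinearMap.smul_apply,
        Prod.smul_mk, Prod.ext_iff, smul_sub, smul_add]
      try constructor
      all_goals try abel)
    (by
      intro m n1 n2
      simp only [Prod.fst_add, Prod.snd_add, map_add, LinearMap.add_apply, Prod.mk_add_mk,
        Prod.ext_iff]
      exact ⟨trivial, by abel⟩)
    (by
      intro r m n
      simp only [Prod.smul_fst, Prod.smul_snd, map_smul, LinearMap.smul_apply,
        Prod.smul_mk, Prod.ext_iff, smul_sub, smul_add]
      try constructor
      all_goals try abel)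

lemma brH_apply (x y : C.Ht) :
    C.brH x y = ((C.PQQ x.2 y.2).1, C.act x.1 y.2 - C.act y.1 x.2 + (C.PQQ x.2 y.2).2) :=
  rfl
lemma pi_one : C.π 1 = 0 := by
  have h := C.hπ_mul 1 1
  rw [mul_one] at h
  have h2 : C.π 1 + C.π 1 = C.π 1 := h.symm
  simpa using add_eq_left.mp h2

lemma pi_inv (a : C.Λt) : C.π a⁻¹ = - C.π a := by
  have h := C.hπ_mul a a⁻¹
  rw [mul_inv_cancel, C.pi_one] at h
  exact (neg_eq_of_add_eq_zero_right h.symm).symm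

lemma pi_c_zpow (n : ℤ) : C.π (C.c ^ n) = 0 := by
  rw [c_zpow_congr C.hc_order (n := n) (m := n) (by omega)]
  have h3 : n % 3 = 0 ∨ n % 3 = 1 ∨ n % 3 = 2 := by omega
  rw [c_zpow_congr C.hc_order (m := n) (n := n % 3) (by omega)]
  rcases h3 with h | h | h <;> rw [h]
  · simpa using C.pi_one
  · simpa using C.hc_ker
  · rw [zpow_two, C.hπ_mul, C.hc_ker, add_zero]

lemma chk_add (α β : C.Λ) : C.chk (α + β) = C.chk α + C.chk β := by
  simp only [chk]
  rw [← TensorProduct.tmul_add]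
  congr 1
  ext x
  simp [C.hB_add_left]

lemma chk_neg (α : C.Λ) : C.chk (-α) = - C.chk α := by
  simp only [chk]
  rw [← TensorProduct.tmul_neg]
  congr 1
  ext x
  simp [B_neg_left C.hB_add_left]

lemma chk_zero : C.chk 0 = 0 := by
  have h := C.chk_add 0 0
  rw [add_zero] at h
  have := add_eq_left.mp h.symm
  simpa using this

lemma laced {α β : C.Λ} (hα : α ∈ C.Φ) (hβ : β ∈ C.Φ) : (α + β) ∈ C.Φ ↔ C.B α β = -1 :=
  C.h_laced α hα β hβ

lemma pval_antisym (g h : C.Λt) (hg : C.π g ∈ C.Φ) (hh : C.π h ∈ C.Φ) :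
    C.pval g h hg hh + C.pval h g hh hg = 0 := by
  by_cases h0 : C.π g + C.π h = 0
  · rw [C.pval_zero hg hh h0, C.pval_zero hh hg (by rw [add_comm]; exact h0)]
    have hβ : C.π h = - C.π g := by
      have : C.π h = -C.π g + (C.π g + C.π h) := by abel
      rw [h0, add_zero] at this; exact this
    -- ν (h*g) = ν (g*h)
    have hcomm : h * g = C.c ^ (C.B (C.π h - C.w (C.π h)) (C.π g)) * (g * h) :=
      C.comm_rule h g
    have hexp : C.B (C.π h - C.w (C.π h)) (C.π g) = -3 := by
      rw [B_sub_left C.hB_add_left]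
      rw [hβ, map_neg, B_neg_left C.hB_add_left, B_neg_left C.hB_add_left]
      have h1 : C.B (C.π g) (C.π g) = 2 := root_norm C.hΦ hg
      have h2 : C.B (C.π g) (C.w (C.π g)) = -1 :=
        root_w_self C.hB_add_right C.hB_symm C.hΦ C.hwB C.hw_ell hg
      have h3 : C.B (C.w (C.π g)) (C.π g) = C.B (C.π g) (C.w (C.π g)) := C.hB_symm _ _
      omega
    have hc3 : (C.c : C.Λt) ^ (-3 : ℤ) = 1 := by
      rw [c_zpow_congr C.hc_order (n := 0) (by omega), zpow_zero]
    have hν : C.ν (h * g) = C.ν (g * h) := by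
      rw [hcomm, hexp, hc3, one_mul]
    rw [hν, hβ, C.chk_neg]
    have hpair : ((-(C.chk (C.π g)) : C.Tt), (0 : C.Qt)) = -((C.chk (C.π g), (0 : C.Qt))) := by
      rw [Prod.neg_mk, neg_zero]
    rw [hpair, smul_neg]
    exact add_neg_cancel _
  · by_cases hs : C.π g + C.π h ∈ C.Φ
    · rw [C.pval_root hg hh hs,
        C.pval_root hh hg (by rw [add_comm (C.π h) (C.π g)]; exact hs)]
      -- rewrite X(h*g)
      set E : ℤ := C.B (C.π h - C.w (C.π h)) (C.π g) with hE
      have hcomm : h * g = C.c ^ E * (g * h) := C.comm_rule h g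
      have hXhg : C.XX (h * g) (by rw [C.hπ_mul, add_comm (C.π h) (C.π g)]; exact hs) =
          ((C.ζ ^ E : C.Rˣ) : C.R) • C.XX (g * h) (by rw [C.hπ_mul]; exact hs) := by
        refine (C.XX_congr hcomm _ ?_).trans ?_
        · rw [C.hπ_mul, C.pi_c_zpow, zero_add, C.hπ_mul]
          exact hs
        · rw [C.X_rescale (C.pi_c_zpow E) (by rw [C.hπ_mul]; exact hs), C.nu_c_pow]
      rw [hXhg]
      have hsw : ((C.eps h g : C.R)) • (((0 : C.Tt),
            ((C.ζ ^ E : C.Rˣ) : C.R) • C.XX (g * h) (by rw [C.hπ_mul]; exact hs))) =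
          ((C.eps h g * C.ζ ^ E : C.Rˣ) : C.R) •
            ((0 : C.Tt), C.XX (g * h) (by rw [C.hπ_mul]; exact hs)) := by
        rw [Prod.smul_mk, Prod.smul_mk, smul_zero, smul_zero, smul_smul]
        push_cast
        ring_nf
      rw [hsw]
      -- scalar identity
      have hunit : C.eps h g * C.ζ ^ E = - C.eps g h := by
        rw [eps, eps, mul_assoc, ← zpow_add]
        -- integer facts
        have hp := B_p_sym C.hB_add_right C.hB_symm C.hwB C.hw_ell (C.π g) (C.π h)
        have hαβ : C.B (C.π g) (C.π h) = -1 := (C.laced hg hh).mp hs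
        have hs1 : C.B (C.π h) (C.π g) = C.B (C.π g) (C.π h) := C.hB_symm _ _
        have hs2 : C.B (C.w (C.π h)) (C.π g) = C.B (C.π g) (C.w (C.π h)) := C.hB_symm _ _
        have hs3 : C.B (C.w (C.π g)) (C.π h) = C.B (C.π h) (C.w (C.π g)) := C.hB_symm _ _
        have he1 : C.B (C.π h - C.w (C.π h)) (C.π g) =
            C.B (C.π h) (C.π g) - C.B (C.w (C.π h)) (C.π g) := B_sub_left C.hB_add_left _ _ _
        have he2 : C.B (C.π g - C.w (C.π g)) (C.π h) =
            C.B (C.π g) (C.π h) - C.B (C.w (C.π g)) (C.π h) := B_sub_left C.hB_add_left _ _ _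
        refine eps_congr_neg C.hζ ?_ ?_
        · omega
        · omega
      rw [hunit]
      push_cast
      rw [neg_smul]
      exact add_neg_cancel _
    · rw [C.pval_none hg hh h0 hs,
        C.pval_none hh hg (by rwa [add_comm]) (by rwa [add_comm]), add_zero]

lemma PQQ_antisym (q q' : C.Qt) : C.PQQ q q' + C.PQQ q' q = 0 := by
  have hmap : C.PQQ + C.PQQ.flip = 0 := by
    apply C.Q_ext
    intro g hg
    apply C.Q_ext
    intro h hh
    simp only [LinearMap.add_apply, LinearMap.flip_apply, LinearMap.zero_apply,
      C.PQQ_XX]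
    exact C.pval_antisym g h hg hh
  have := LinearMap.congr_fun (LinearMap.congr_fun hmap q) q'
  simpa using this

lemma PQQ_self (q : C.Qt) : C.PQQ q q = 0 := by
  have h := C.PQQ_antisym q q
  have h2 : (2 : C.R) • C.PQQ q q = 0 := by rw [two_smul]; exact h
  have h4 : ((C.h2.unit⁻¹ : C.Rˣ) : C.R) * 2 = 1 := by
    have hu := Units.inv_mul C.h2.unit
    rwa [C.h2.unit_spec] at hu
  calc C.PQQ q q = ((C.h2.unit⁻¹ : C.Rˣ) : C.R) • ((2 : C.R) • C.PQQ q q) := by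
        rw [smul_smul, h4, one_smul]
    _ = 0 := by rw [h2, smul_zero]

lemma brH_alt (x : C.Ht) : C.brH x x = 0 := by
  rw [C.brH_apply, C.PQQ_self, sub_self]
  simp
lemma brTT (t t' : C.Tt) : C.brH (t, (0 : C.Qt)) (t', (0 : C.Qt)) = 0 := by
  rw [brH_apply]
  simp [Prod.ext_iff]

lemma brTX (t : C.Tt) (q : C.Qt) :
    C.brH (t, (0 : C.Qt)) ((0 : C.Tt), q) = ((0 : C.Tt), C.act t q) := by
  rw [brH_apply]
  simp [Prod.ext_iff]

lemma brXT (q : C.Qt) (t : C.Tt) :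
    C.brH ((0 : C.Tt), q) (t, (0 : C.Qt)) = ((0 : C.Tt), - C.act t q) := by
  rw [brH_apply]
  simp [Prod.ext_iff]

lemma brXX (q q' : C.Qt) :
    C.brH ((0 : C.Tt), q) ((0 : C.Tt), q') = C.PQQ q q' := by
  rw [brH_apply]
  have h1 : (C.PQQ q q').1 = (C.PQQ q q').1 := rfl
  refine Prod.ext rfl ?_
  simp

lemma smul_pair (r : C.R) (v : C.Qt) :
    r • ((0 : C.Tt), v) = ((0 : C.Tt), r • v) := by
  rw [Prod.smul_mk, smul_zero]

lemma smul_pairT (r : C.R) (t : C.Tt) :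
    r • (t, (0 : C.Qt)) = (r • t, (0 : C.Qt)) := by
  rw [Prod.smul_mk, smul_zero]

lemma X_shift (m f : C.Λt) (hm : C.π m ∈ C.Φ) (hf : C.π f ∈ C.Φ)
    (hmf : C.π m = C.π f) :
    C.XX m hm = C.ν (m * f⁻¹) • C.XX f hf := by
  have hz : C.π (m * f⁻¹) = 0 := by
    rw [C.hπ_mul, C.pi_inv, hmf, add_neg_cancel]
  refine (C.XX_congr (show m = (m * f⁻¹) * f by group) hm
    (by rw [C.hπ_mul, hz, zero_add]; exact hf)).trans ?_
  exact C.X_rescale hz hf _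

lemma br_XH_chkpair (f : C.Λt) (hf : C.π f ∈ C.Φ) (r : C.R) (β : C.Λ) :
    C.brH ((0 : C.Tt), C.XX f hf) (r • (C.chk β, (0 : C.Qt))) =
      ((0 : C.Tt), (-(r * ((C.B β (C.π f) : ℤ) : C.R))) • C.XX f hf) := by
  rw [map_smul, C.brXT, C.act_chk, C.smul_pair]
  congr 1
  rw [smul_neg, smul_smul, neg_smul]

lemma br_XH_Xpair (f : C.Λt) (hf : C.π f ∈ C.Φ) (r : C.R) (m : C.Λt) (hm : C.π m ∈ C.Φ) :
    C.brH ((0 : C.Tt), C.XX f hf) (r • ((0 : C.Tt), C.XX m hm)) =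
      r • C.pval f m hf hm := by
  rw [map_smul, C.brXX, C.PQQ_XX]

lemma pair_sum_zero (v1 v2 v3 : C.Qt) (h : v1 + v2 + v3 = 0) :
    ((0 : C.Tt), v1) + ((0 : C.Tt), v2) + ((0 : C.Tt), v3) = 0 := by
  rw [Prod.mk_add_mk, Prod.mk_add_mk, h, add_zero, add_zero]
  rfl
lemma root_neg {α : C.Λ} (hα : α ∈ C.Φ) : -α ∈ C.Φ := by
  rw [C.hΦ] at hα ⊢
  simp only [Set.mem_setOf_eq] at hα ⊢
  rw [B_neg_left C.hB_add_left, B_neg_right C.hB_add_right, neg_neg]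
  exact hα

lemma pair_sum_zeroT (t1 t2 t3 : C.Tt) (h : t1 + t2 + t3 = 0) :
    ((t1 : C.Tt), (0 : C.Qt)) + (t2, (0 : C.Qt)) + (t3, (0 : C.Qt)) = 0 := by
  rw [Prod.mk_add_mk, Prod.mk_add_mk, h, add_zero, add_zero]
  rfl

lemma brX_pval_of_not (x y z : C.Λt) (hx : C.π x ∈ C.Φ) (hy : C.π y ∈ C.Φ)
    (hz' : C.π z ∈ C.Φ) (hne : C.π x + C.π y + C.π z ≠ 0)
    (hnr : C.π x + C.π y + C.π z ∉ C.Φ) :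
    C.brH ((0 : C.Tt), C.XX x hx) (C.pval y z hy hz') = 0 := by
  by_cases h0 : C.π y + C.π z = 0
  · exfalso
    apply hnr
    have hre : C.π x + C.π y + C.π z = C.π x := by rw [add_assoc, h0, add_zero]
    rw [hre]
    exact hx
  · by_cases hs : C.π y + C.π z ∈ C.Φ
    · rw [C.pval_root hy hz' hs, C.br_XH_Xpair, C.pval_none hx _
        (by rw [C.hπ_mul, ← add_assoc]; exact hne)
        (by rw [C.hπ_mul, ← add_assoc]; exact hnr), smul_zero]
    · rw [C.pval_none hy hz' h0 hs, map_zero]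

lemma L_J0 (f g h : C.Λt) (hf : C.π f ∈ C.Φ) (hg : C.π g ∈ C.Φ) (hh : C.π h ∈ C.Φ)
    (hne : C.π f + C.π g + C.π h ≠ 0) (hnr : C.π f + C.π g + C.π h ∉ C.Φ) :
    C.brH ((0 : C.Tt), C.XX f hf) (C.pval g h hg hh) +
    C.brH ((0 : C.Tt), C.XX g hg) (C.pval h f hh hf) +
    C.brH ((0 : C.Tt), C.XX h hh) (C.pval f g hf hg) = 0 := by
  have e2 : C.π g + C.π h + C.π f = C.π f + C.π g + C.π h := by abel
  have e3 : C.π h + C.π f + C.π g = C.π f + C.π g + C.π h := by abel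
  rw [C.brX_pval_of_not f g h hf hg hh hne hnr,
    C.brX_pval_of_not g h f hg hh hf (by rw [e2]; exact hne) (by rw [e2]; exact hnr),
    C.brX_pval_of_not h f g hh hf hg (by rw [e3]; exact hne) (by rw [e3]; exact hnr)]
  simp

lemma L_JA (f g h : C.Λt) (hf : C.π f ∈ C.Φ) (hg : C.π g ∈ C.Φ) (hh : C.π h ∈ C.Φ)
    (hsum : C.π f + C.π g + C.π h = 0) :
    C.brH ((0 : C.Tt), C.XX f hf) (C.pval g h hg hh) +
    C.brH ((0 : C.Tt), C.XX g hg) (C.pval h f hh hf) +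
    C.brH ((0 : C.Tt), C.XX h hh) (C.pval f g hf hg) = 0 := by
  have hsum' : C.π f + (C.π g + C.π h) = 0 := by rw [← add_assoc]; exact hsum
  have hsumg : C.π g + (C.π h + C.π f) = 0 := by
    rw [show C.π g + (C.π h + C.π f) = C.π f + C.π g + C.π h by abel, hsum]
  have hsumh : C.π h + (C.π f + C.π g) = 0 := by
    rw [show C.π h + (C.π f + C.π g) = C.π f + C.π g + C.π h by abel, hsum]
  have h1 : C.π g + C.π h = - C.π f := eq_neg_of_add_eq_zero_right hsum'
  have h2 : C.π h + C.π f = - C.π g := eq_neg_of_add_eq_zero_right hsumg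
  have h3 : C.π f + C.π g = - C.π h := eq_neg_of_add_eq_zero_right hsumh
  have hr1 : C.π g + C.π h ∈ C.Φ := by rw [h1]; exact C.root_neg hf
  have hr2 : C.π h + C.π f ∈ C.Φ := by rw [h2]; exact C.root_neg hg
  have hr3 : C.π f + C.π g ∈ C.Φ := by rw [h3]; exact C.root_neg hh
  have hγeq : C.π h = -(C.π f + C.π g) := by rw [h3, neg_neg]
  -- evaluate the three terms
  rw [C.pval_root hg hh hr1, C.br_XH_Xpair,
      C.pval_root hh hf hr2, C.br_XH_Xpair,
      C.pval_root hf hg hr3, C.br_XH_Xpair,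
      C.pval_zero hf (by rw [C.hπ_mul]; exact hr1) (by rw [C.hπ_mul]; exact hsum'),
      C.pval_zero hg (by rw [C.hπ_mul]; exact hr2) (by rw [C.hπ_mul]; exact hsumg),
      C.pval_zero hh (by rw [C.hπ_mul]; exact hr3) (by rw [C.hπ_mul]; exact hsumh)]
  rw [smul_smul, smul_smul, smul_smul, C.smul_pairT, C.smul_pairT, C.smul_pairT]
  apply C.pair_sum_zeroT
  -- group element identities
  have hzc : C.π (f * (g * h)) = 0 := by rw [C.hπ_mul, C.hπ_mul, ← add_assoc]; exact hsum
  have hcen := fun x => C.kcentral hzc x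
  have e2 : g * (h * f) = f * (g * h) := by
    have hh' : g * (h * f) = f⁻¹ * ((f * (g * h)) * f) := by group
    rw [hh', hcen f]
    group
  have e3 : h * (f * g) = f * (g * h) := by
    have hh' : h * (f * g) = (f * g)⁻¹ * ((f * (g * h)) * (f * g)) := by group
    rw [hh', hcen (f * g)]
    group
  -- integer facts
  have hαβ : C.B (C.π f) (C.π g) = -1 := (C.laced hf hg).mp hr3
  have hpq := B_p_sym C.hB_add_right C.hB_symm C.hwB C.hw_ell (C.π f) (C.π g)
  have hwa : C.B (C.π f) (C.w (C.π f)) = -1 :=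
    root_w_self C.hB_add_right C.hB_symm C.hΦ C.hwB C.hw_ell hf
  have hwb : C.B (C.π g) (C.w (C.π g)) = -1 :=
    root_w_self C.hB_add_right C.hB_symm C.hΦ C.hwB C.hw_ell hg
  have haa : C.B (C.π f) (C.π f) = 2 := root_norm C.hΦ hf
  have hbb : C.B (C.π g) (C.π g) = 2 := root_norm C.hΦ hg
  have hsym1 : C.B (C.π g) (C.π f) = C.B (C.π f) (C.π g) := C.hB_symm _ _
  have hsym2 : C.B (C.w (C.π g)) (C.π f) = C.B (C.π f) (C.w (C.π g)) := C.hB_symm _ _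
  have hsym3 : C.B (C.w (C.π g)) (C.π g) = C.B (C.π g) (C.w (C.π g)) := C.hB_symm _ _
  have hsym4 : C.B (C.w (C.π f)) (C.π g) = C.B (C.π g) (C.w (C.π f)) := C.hB_symm _ _
  have hsym5 : C.B (C.w (C.π f)) (C.π f) = C.B (C.π f) (C.w (C.π f)) := C.hB_symm _ _
  -- epsilon equalities
  have heps1 : C.eps g h = C.eps f g := by
    rw [eps, eps]
    refine eps_congr C.hζ ?_ ?_ <;>
      simp only [hγeq, B_sub_left C.hB_add_left, map_neg, map_add,
        B_neg_right C.hB_add_right, C.hB_add_right, B_neg_left C.hB_add_left,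
        C.hB_add_left] <;> omega
  have heps2 : C.eps h f = C.eps f g := by
    rw [eps, eps]
    refine eps_congr C.hζ ?_ ?_ <;>
      simp only [hγeq, B_sub_left C.hB_add_left, map_neg, map_add,
        B_neg_right C.hB_add_right, C.hB_add_right, B_neg_left C.hB_add_left,
        C.hB_add_left] <;> omega
  rw [show C.ν (g * (h * f)) = C.ν (f * (g * h)) from congrArg C.ν e2,
      show C.ν (h * (f * g)) = C.ν (f * (g * h)) from congrArg C.ν e3,
      heps1, heps2]
  rw [← smul_add, ← smul_add, ← C.chk_add, ← C.chk_add, hsum, C.chk_zero, smul_zero]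
lemma mul_comm_opp {a b : C.Λt} (ha : C.π a ∈ C.Φ) (hb : C.π b ∈ C.Φ)
    (hab : C.π a + C.π b = 0) : a * b = b * a := by
  have hbeq : C.π a = - C.π b := eq_neg_of_add_eq_zero_left hab
  have hwb : C.B (C.π b) (C.w (C.π b)) = -1 :=
    root_w_self C.hB_add_right C.hB_symm C.hΦ C.hwB C.hw_ell hb
  have hbb : C.B (C.π b) (C.π b) = 2 := root_norm C.hΦ hb
  have hsym : C.B (C.w (C.π b)) (C.π b) = C.B (C.π b) (C.w (C.π b)) := C.hB_symm _ _
  have hexp : C.B (C.π a - C.w (C.π a)) (C.π b) = -3 := by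
    simp only [hbeq, B_sub_left C.hB_add_left, map_neg, B_neg_left C.hB_add_left]
    omega
  rw [C.comm_rule a b, hexp,
    show (C.c : C.Λt) ^ (-3 : ℤ) = 1 by
      rw [c_zpow_congr C.hc_order (n := 0) (by omega), zpow_zero], one_mul]

lemma L_JB (f g h : C.Λt) (hf : C.π f ∈ C.Φ) (hg : C.π g ∈ C.Φ) (hh : C.π h ∈ C.Φ)
    (hgh : C.π g + C.π h = 0) :
    C.brH ((0 : C.Tt), C.XX f hf) (C.pval g h hg hh) +
    C.brH ((0 : C.Tt), C.XX g hg) (C.pval h f hh hf) +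
    C.brH ((0 : C.Tt), C.XX h hh) (C.pval f g hf hg) = 0 := by
  have hγ : C.π h = - C.π g := eq_neg_of_add_eq_zero_right hgh
  have hgh0 : C.π (g * h) = 0 := by rw [C.hπ_mul]; exact hgh
  -- standard integer facts
  have haa : C.B (C.π f) (C.π f) = 2 := root_norm C.hΦ hf
  have hbb : C.B (C.π g) (C.π g) = 2 := root_norm C.hΦ hg
  have hwa : C.B (C.π f) (C.w (C.π f)) = -1 :=
    root_w_self C.hB_add_right C.hB_symm C.hΦ C.hwB C.hw_ell hf
  have hwb : C.B (C.π g) (C.w (C.π g)) = -1 :=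
    root_w_self C.hB_add_right C.hB_symm C.hΦ C.hwB C.hw_ell hg
  have hpq := B_p_sym C.hB_add_right C.hB_symm C.hwB C.hw_ell (C.π f) (C.π g)
  have hsym1 : C.B (C.π g) (C.π f) = C.B (C.π f) (C.π g) := C.hB_symm _ _
  have hsym2 : C.B (C.w (C.π g)) (C.π f) = C.B (C.π f) (C.w (C.π g)) := C.hB_symm _ _
  have hsym3 : C.B (C.w (C.π g)) (C.π g) = C.B (C.π g) (C.w (C.π g)) := C.hB_symm _ _
  have hsym4 : C.B (C.w (C.π f)) (C.π g) = C.B (C.π g) (C.w (C.π f)) := C.hB_symm _ _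
  have hsym5 : C.B (C.w (C.π f)) (C.π f) = C.B (C.π f) (C.w (C.π f)) := C.hB_symm _ _
  have hbnd := root_pair_bounds C.hB_add_left C.hB_add_right C.hB_symm C.hB_pos C.hΦ hf hg
  -- term1 in all cases
  rw [C.pval_zero hg hh hgh, C.br_XH_chkpair]
  have hb5 : C.B (C.π f) (C.π g) = -2 ∨ C.B (C.π f) (C.π g) = -1 ∨
      C.B (C.π f) (C.π g) = 0 ∨ C.B (C.π f) (C.π g) = 1 ∨ C.B (C.π f) (C.π g) = 2 := by
    omega
  rcases hb5 with hb | hb | hb | hb | hb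
  · -- b = -2 : α = -β = γ
    have hfg0 : C.π f + C.π g = 0 :=
      (root_pair_neg_two C.hB_add_left C.hB_add_right C.hB_symm C.hB_pos C.hΦ hf hg).mpr hb
    have hππ : C.π h = C.π f := by
      rw [hγ, (eq_neg_of_add_eq_zero_left hfg0)]
    have hne2 : ¬ (C.π h + C.π f = 0) := by
      intro hz
      have := (root_pair_neg_two C.hB_add_left C.hB_add_right C.hB_symm C.hB_pos C.hΦ
        hh hf).mp hz
      have hBhf : C.B (C.π h) (C.π f) = 2 := by rw [hππ]; exact haa
      omega
    have hnr2 : (C.π h + C.π f) ∉ C.Φ := by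
      intro hmem
      have := (C.laced hh hf).mp hmem
      have hBhf : C.B (C.π h) (C.π f) = 2 := by rw [hππ]; exact haa
      omega
    rw [C.pval_none hh hf hne2 hnr2, map_zero, C.pval_zero hf hg hfg0, C.br_XH_chkpair,
      add_zero]
    rw [C.X_shift h f hh hf hππ, Prod.mk_add_mk, add_zero]
    refine Prod.ext rfl ?_
    show _ = (0 : C.Qt)
    rw [smul_smul, ← add_smul]
    have hBgf : C.B (C.π g) (C.π f) = -2 := by omega
    have hBfh : C.B (C.π f) (C.π h) = 2 := by rw [hππ]; exact haa
    rw [hBgf, hBfh]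
    -- coefficient computation
    have hz1 : C.π (f * g) = 0 := by rw [C.hπ_mul]; exact hfg0
    have hz2 : C.π (h * f⁻¹) = 0 := by rw [C.hπ_mul, C.pi_inv, hππ, add_neg_cancel]
    have hνkey : C.ν (f * g) * C.ν (h * f⁻¹) = C.ν (g * h) := by
      rw [← C.nu_mul hz1 hz2]
      have e1 : (f * g) * (h * f⁻¹) = h * g := by
        rw [C.kcentral hz1 (h * f⁻¹)]
        group
      rw [e1, C.mul_comm_opp hh hg (by rw [hγ, neg_add_cancel])]
    convert zero_smul C.R (C.XX f hf) using 2
    push_cast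
    linear_combination (2 : C.R) * hνkey
  · -- b = -1 : α + β is a root
    have hr3 : C.π f + C.π g ∈ C.Φ := (C.laced hf hg).mpr hb
    have hBhf : C.B (C.π h) (C.π f) = 1 := by
      rw [hγ, B_neg_left C.hB_add_left]; omega
    have hne2 : ¬ (C.π h + C.π f = 0) := by
      intro hz
      have := (root_pair_neg_two C.hB_add_left C.hB_add_right C.hB_symm C.hB_pos C.hΦ
        hh hf).mp hz
      omega
    have hnr2 : (C.π h + C.π f) ∉ C.Φ := by
      intro hmem
      have := (C.laced hh hf).mp hmem
      omega
    rw [C.pval_none hh hf hne2 hnr2, map_zero, add_zero, C.pval_root hf hg hr3,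
      C.br_XH_Xpair]
    have hs3 : C.π h + C.π (f * g) ∈ C.Φ := by
      rw [C.hπ_mul, hγ, show - C.π g + (C.π f + C.π g) = C.π f by abel]
      exact hf
    rw [C.pval_root hh (by rw [C.hπ_mul]; exact hr3) hs3, smul_smul]
    have hππ : C.π (h * (f * g)) = C.π f := by
      rw [C.hπ_mul, C.hπ_mul, hγ]
      abel
    rw [C.X_shift (h * (f * g)) f (by rw [hππ]; exact hf) hf hππ, C.smul_pair,
      Prod.mk_add_mk, add_zero]
    refine Prod.ext rfl ?_
    show _ = (0 : C.Qt)
    rw [smul_smul, ← add_smul]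
    have hBgf : C.B (C.π g) (C.π f) = -1 := by omega
    rw [hBgf]
    -- ν of the twisted element
    set E : ℤ := C.B (C.π f - C.w (C.π f)) (C.π g) with hE
    have hfgc : f * g = C.c ^ E * (g * f) := C.comm_rule f g
    have eZ : (h * (f * g)) * f⁻¹ = C.c ^ E * (g * h) := by
      rw [hfgc, show h * (C.c ^ E * (g * f)) * f⁻¹ = C.c ^ E * (h * g) by
        rw [← mul_assoc h, ← C.kcentral (C.pi_c_zpow E) h]; group,
        C.mul_comm_opp hh hg (by rw [hγ, neg_add_cancel])]
    have hνZ : C.ν ((h * (f * g)) * f⁻¹) =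
        ((C.ζ ^ E : C.Rˣ) : C.R) * C.ν (g * h) := by
      rw [eZ, C.nu_mul (C.pi_c_zpow E) hgh0, C.nu_c_pow]
    -- unit identity
    have hU : C.eps f g * C.eps h (f * g) * C.ζ ^ E = 1 := by
      rw [eps, eps, eps_mul, mul_assoc, ← zpow_add]
      have h1 : ((-1 : C.Rˣ)) ^ ((0 : ℤ)) * C.ζ ^ ((0 : ℤ)) = 1 := by simp
      conv_rhs => rw [← h1]
      refine eps_congr C.hζ ?_ ?_ <;>
        simp only [hE, C.hπ_mul, hγ, B_sub_left C.hB_add_left, map_neg, map_add,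
          B_neg_right C.hB_add_right, B_neg_left C.hB_add_left, C.hB_add_right,
          C.hB_add_left] <;>
        omega
    have hUR : ((C.eps f g : C.R)) * ((C.eps h (f * g) : C.R)) *
        ((C.ζ ^ E : C.Rˣ) : C.R) = 1 := by
      rw [← Units.val_mul, ← Units.val_mul, hU, Units.val_one]
    rw [hνZ]
    convert zero_smul C.R (C.XX f hf) using 2
    push_cast
    linear_combination C.ν (g * h) * hUR
  · -- b = 0 : everything vanishes
    have hBgf : C.B (C.π g) (C.π f) = 0 := by omega
    have hBhf : C.B (C.π h) (C.π f) = 0 := by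
      rw [hγ, B_neg_left C.hB_add_left]; omega
    have hne2 : ¬ (C.π h + C.π f = 0) := by
      intro hz
      have := (root_pair_neg_two C.hB_add_left C.hB_add_right C.hB_symm C.hB_pos C.hΦ
        hh hf).mp hz
      omega
    have hnr2 : (C.π h + C.π f) ∉ C.Φ := by
      intro hmem
      have := (C.laced hh hf).mp hmem
      omega
    have hne3 : ¬ (C.π f + C.π g = 0) := by
      intro hz
      have := (root_pair_neg_two C.hB_add_left C.hB_add_right C.hB_symm C.hB_pos C.hΦ
        hf hg).mp hz
      omega
    have hnr3 : (C.π f + C.π g) ∉ C.Φ := by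
      intro hmem
      have := (C.laced hf hg).mp hmem
      omega
    rw [C.pval_none hh hf hne2 hnr2, map_zero, C.pval_none hf hg hne3 hnr3, map_zero,
      add_zero, add_zero, hBgf]
    norm_num
  · -- b = 1 : γ + α is a root
    have hBhf : C.B (C.π h) (C.π f) = -1 := by
      rw [hγ, B_neg_left C.hB_add_left]; omega
    have hr2 : C.π h + C.π f ∈ C.Φ := (C.laced hh hf).mpr hBhf
    have hne3 : ¬ (C.π f + C.π g = 0) := by
      intro hz
      have := (root_pair_neg_two C.hB_add_left C.hB_add_right C.hB_symm C.hB_pos C.hΦ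
        hf hg).mp hz
      omega
    have hnr3 : (C.π f + C.π g) ∉ C.Φ := by
      intro hmem
      have := (C.laced hf hg).mp hmem
      omega
    rw [C.pval_none hf hg hne3 hnr3, map_zero, add_zero, C.pval_root hh hf hr2,
      C.br_XH_Xpair]
    have hs2 : C.π g + C.π (h * f) ∈ C.Φ := by
      rw [C.hπ_mul, hγ, show C.π g + (- C.π g + C.π f) = C.π f by abel]
      exact hf
    rw [C.pval_root hg (by rw [C.hπ_mul]; exact hr2) hs2, smul_smul]
    have hππ : C.π (g * (h * f)) = C.π f := by
      rw [C.hπ_mul, C.hπ_mul, hγ]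
      abel
    rw [C.X_shift (g * (h * f)) f (by rw [hππ]; exact hf) hf hππ, C.smul_pair,
      Prod.mk_add_mk, add_zero]
    refine Prod.ext rfl ?_
    show _ = (0 : C.Qt)
    rw [smul_smul, ← add_smul]
    have hBgf : C.B (C.π g) (C.π f) = 1 := by omega
    rw [hBgf]
    have eZ : (g * (h * f)) * f⁻¹ = g * h := by group
    have hνZ : C.ν ((g * (h * f)) * f⁻¹) = C.ν (g * h) := congrArg C.ν eZ
    have hU : C.eps h f * C.eps g (h * f) = -1 := by
      rw [eps, eps, eps_mul]
      have h1 : -(((-1 : C.Rˣ)) ^ ((0 : ℤ)) * C.ζ ^ ((0 : ℤ))) = -1 := by simp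
      conv_rhs => rw [← h1]
      refine eps_congr_neg C.hζ ?_ ?_ <;>
        simp only [C.hπ_mul, hγ, B_sub_left C.hB_add_left, map_neg, map_add,
          B_neg_right C.hB_add_right, B_neg_left C.hB_add_left, C.hB_add_right,
          C.hB_add_left] <;>
        omega
    have hUR : ((C.eps h f : C.R)) * ((C.eps g (h * f) : C.R)) = -1 := by
      rw [← Units.val_mul, hU]
      push_cast
      ring
    rw [hνZ]
    convert zero_smul C.R (C.XX f hf) using 2
    push_cast
    linear_combination C.ν (g * h) * hUR
  · -- b = 2 : α = β
    have hππ : C.π f = C.π g :=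
      (root_pair_two C.hB_add_left C.hB_add_right C.hB_symm C.hB_pos C.hΦ hf hg).mpr hb
    have hz2 : C.π h + C.π f = 0 := by rw [hγ, hππ, neg_add_cancel]
    have hne3 : ¬ (C.π f + C.π g = 0) := by
      intro hz
      have := (root_pair_neg_two C.hB_add_left C.hB_add_right C.hB_symm C.hB_pos C.hΦ
        hf hg).mp hz
      omega
    have hnr3 : (C.π f + C.π g) ∉ C.Φ := by
      intro hmem
      have := (C.laced hf hg).mp hmem
      omega
    rw [C.pval_zero hh hf hz2, C.br_XH_chkpair, C.pval_none hf hg hne3 hnr3, map_zero,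
      add_zero]
    rw [C.X_shift f g hf hg hππ, Prod.mk_add_mk, add_zero]
    refine Prod.ext rfl ?_
    show _ = (0 : C.Qt)
    rw [smul_smul, ← add_smul]
    have hBgf : C.B (C.π g) (C.π f) = 2 := by omega
    have hBhg : C.B (C.π h) (C.π g) = -2 := by
      rw [hγ, B_neg_left C.hB_add_left]; omega
    rw [hBgf, hBhg]
    have hz1 : C.π (g * h) = 0 := hgh0
    have hz2' : C.π (f * g⁻¹) = 0 := by rw [C.hπ_mul, C.pi_inv, hππ, add_neg_cancel]
    have hνkey : C.ν (g * h) * C.ν (f * g⁻¹) = C.ν (h * f) := by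
      rw [← C.nu_mul hz1 hz2']
      have e1 : (g * h) * (f * g⁻¹) = f * h := by
        rw [C.kcentral hz1 (f * g⁻¹)]
        group
      rw [e1, C.mul_comm_opp hf hh (by rw [hγ, hππ, add_neg_cancel])]
    convert zero_smul C.R (C.XX g hg) using 2
    push_cast
    linear_combination (2 : C.R) * hνkey
lemma L_JC (f g h : C.Λt) (hf : C.π f ∈ C.Φ) (hg : C.π g ∈ C.Φ) (hh : C.π h ∈ C.Φ)
    (hab : C.B (C.π f) (C.π g) = 0) (hbc : C.B (C.π g) (C.π h) = -1)
    (hca : C.B (C.π h) (C.π f) = -1) (hs : C.π f + C.π g + C.π h ∈ C.Φ) :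
    C.brH ((0 : C.Tt), C.XX f hf) (C.pval g h hg hh) +
    C.brH ((0 : C.Tt), C.XX g hg) (C.pval h f hh hf) +
    C.brH ((0 : C.Tt), C.XX h hh) (C.pval f g hf hg) = 0 := by
  -- term 3 vanishes
  have hne3 : ¬ (C.π f + C.π g = 0) := by
    intro hz
    have := (root_pair_neg_two C.hB_add_left C.hB_add_right C.hB_symm C.hB_pos C.hΦ
      hf hg).mp hz
    omega
  have hnr3 : (C.π f + C.π g) ∉ C.Φ := by
    intro hmem
    have := (C.laced hf hg).mp hmem
    omega
  rw [C.pval_none hf hg hne3 hnr3, map_zero, add_zero]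
  -- term 1
  have hr1 : C.π g + C.π h ∈ C.Φ := (C.laced hg hh).mpr hbc
  have hs1 : C.π f + C.π (g * h) ∈ C.Φ := by
    rw [C.hπ_mul, ← add_assoc]; exact hs
  rw [C.pval_root hg hh hr1, C.br_XH_Xpair,
    C.pval_root hf (by rw [C.hπ_mul]; exact hr1) hs1, smul_smul]
  -- term 2
  have hr2 : C.π h + C.π f ∈ C.Φ := (C.laced hh hf).mpr hca
  have hs2 : C.π g + C.π (h * f) ∈ C.Φ := by
    rw [C.hπ_mul, show C.π g + (C.π h + C.π f) = C.π f + C.π g + C.π h by abel]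
    exact hs
  rw [C.pval_root hh hf hr2, C.br_XH_Xpair,
    C.pval_root hg (by rw [C.hπ_mul]; exact hr2) hs2, smul_smul]
  -- rewrite the second X in terms of the first
  set E1 : ℤ := C.B (C.π h - C.w (C.π h)) (C.π f) with hE1
  set E2 : ℤ := C.B (C.π g - C.w (C.π g)) (C.π f) with hE2
  have hcf : h * f = C.c ^ E1 * (f * h) := C.comm_rule h f
  have hcg : g * f = C.c ^ E2 * (f * g) := C.comm_rule g f
  have eZ : g * (h * f) = C.c ^ (E1 + E2) * (f * (g * h)) := by
    rw [hcf, show g * (C.c ^ E1 * (f * h)) = C.c ^ E1 * ((g * f) * h) by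
        rw [← mul_assoc g, ← C.kcentral (C.pi_c_zpow E1) g]; group,
      hcg, zpow_add]
    group
  have hπ1 : C.π (f * (g * h)) ∈ C.Φ := by
    rw [C.hπ_mul, C.hπ_mul, ← add_assoc]; exact hs
  have hXZ : C.XX (g * (h * f)) (by rw [C.hπ_mul, C.hπ_mul,
        show C.π g + (C.π h + C.π f) = C.π f + C.π g + C.π h by abel]; exact hs) =
      ((C.ζ ^ (E1 + E2) : C.Rˣ) : C.R) • C.XX (f * (g * h)) hπ1 := by
    refine (C.XX_congr eZ _ (by rw [C.hπ_mul, C.pi_c_zpow, zero_add]; exact hπ1)).trans ?_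
    rw [C.X_rescale (C.pi_c_zpow (E1 + E2)) hπ1, C.nu_c_pow]
  rw [hXZ, ← C.smul_pair, smul_smul, ← add_smul]
  convert zero_smul C.R (((0 : C.Tt), C.XX (f * (g * h)) hπ1)) using 2
  -- the unit identity
  have hpq12 := B_p_sym C.hB_add_right C.hB_symm C.hwB C.hw_ell (C.π f) (C.π g)
  have hpq23 := B_p_sym C.hB_add_right C.hB_symm C.hwB C.hw_ell (C.π g) (C.π h)
  have hpq13 := B_p_sym C.hB_add_right C.hB_symm C.hwB C.hw_ell (C.π f) (C.π h)
  have hsa1 : C.B (C.π g) (C.π f) = C.B (C.π f) (C.π g) := C.hB_symm _ _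
  have hsa2 : C.B (C.π h) (C.π g) = C.B (C.π g) (C.π h) := C.hB_symm _ _
  have hsa3 : C.B (C.π f) (C.π h) = C.B (C.π h) (C.π f) := C.hB_symm _ _
  have hsb1 : C.B (C.w (C.π g)) (C.π f) = C.B (C.π f) (C.w (C.π g)) := C.hB_symm _ _
  have hsb2 : C.B (C.w (C.π f)) (C.π g) = C.B (C.π g) (C.w (C.π f)) := C.hB_symm _ _
  have hsb3 : C.B (C.w (C.π h)) (C.π g) = C.B (C.π g) (C.w (C.π h)) := C.hB_symm _ _
  have hsb4 : C.B (C.w (C.π g)) (C.π h) = C.B (C.π h) (C.w (C.π g)) := C.hB_symm _ _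
  have hsb5 : C.B (C.w (C.π h)) (C.π f) = C.B (C.π f) (C.w (C.π h)) := C.hB_symm _ _
  have hsb6 : C.B (C.w (C.π f)) (C.π h) = C.B (C.π h) (C.w (C.π f)) := C.hB_symm _ _
  have hU : C.eps h f * C.eps g (h * f) * C.ζ ^ (E1 + E2) =
      -(C.eps g h * C.eps f (g * h)) := by
    rw [eps, eps, eps, eps, eps_mul, eps_mul, mul_assoc, ← zpow_add]
    refine eps_congr_neg C.hζ ?_ ?_ <;>
      simp only [hE1, hE2, C.hπ_mul, B_sub_left C.hB_add_left, map_add,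
        C.hB_add_right, C.hB_add_left] <;>
      omega
  have hUR : ((C.eps h f : C.R)) * ((C.eps g (h * f) : C.R)) *
      ((C.ζ ^ (E1 + E2) : C.Rˣ) : C.R) =
      -(((C.eps g h : C.R)) * ((C.eps f (g * h) : C.R))) := by
    rw [← Units.val_mul, ← Units.val_mul, hU, ← Units.val_mul]
    push_cast
    ring
  linear_combination hUR
end Ctx

lemma rot3 {M : Type} [AddCommGroup M] {a b cc : M} (h : b + cc + a = 0) :
    a + b + cc = 0 := by
  rw [show a + b + cc = b + cc + a by abel]; exact h

lemma rot3' {M : Type} [AddCommGroup M] {a b cc : M} (h : cc + a + b = 0) :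
    a + b + cc = 0 := by
  rw [show a + b + cc = cc + a + b by abel]; exact h

namespace Ctx

variable (C : Ctx)

lemma L_XXX (f g h : C.Λt) (hf : C.π f ∈ C.Φ) (hg : C.π g ∈ C.Φ) (hh : C.π h ∈ C.Φ) :
    C.brH ((0 : C.Tt), C.XX f hf) (C.pval g h hg hh) +
    C.brH ((0 : C.Tt), C.XX g hg) (C.pval h f hh hf) +
    C.brH ((0 : C.Tt), C.XX h hh) (C.pval f g hf hg) = 0 := by
  by_cases hs0 : C.π f + C.π g + C.π h = 0
  · exact C.L_JA f g h hf hg hh hs0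
  by_cases h23 : C.π g + C.π h = 0
  · exact C.L_JB f g h hf hg hh h23
  by_cases h31 : C.π h + C.π f = 0
  · exact rot3 (C.L_JB g h f hg hh hf h31)
  by_cases h12 : C.π f + C.π g = 0
  · exact rot3' (C.L_JB h f g hh hf hg h12)
  by_cases hsr : C.π f + C.π g + C.π h ∈ C.Φ
  · -- classification of the pairwise products
    have hb12 := root_pair_bounds C.hB_add_left C.hB_add_right C.hB_symm C.hB_pos C.hΦ hf hg
    have hb23 := root_pair_bounds C.hB_add_left C.hB_add_right C.hB_symm C.hB_pos C.hΦ hg hh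
    have hb31 := root_pair_bounds C.hB_add_left C.hB_add_right C.hB_symm C.hB_pos C.hΦ hh hf
    have hn12 : C.B (C.π f) (C.π g) ≠ -2 := fun hx => h12
      ((root_pair_neg_two C.hB_add_left C.hB_add_right C.hB_symm C.hB_pos C.hΦ hf hg).mpr hx)
    have hn23 : C.B (C.π g) (C.π h) ≠ -2 := fun hx => h23
      ((root_pair_neg_two C.hB_add_left C.hB_add_right C.hB_symm C.hB_pos C.hΦ hg hh).mpr hx)
    have hn31 : C.B (C.π h) (C.π f) ≠ -2 := fun hx => h31
      ((root_pair_neg_two C.hB_add_left C.hB_add_right C.hB_symm C.hB_pos C.hΦ hh hf).mpr hx)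
    have hnorm := root_norm C.hΦ hsr
    rw [C.hB_add_left, C.hB_add_left, C.hB_add_right, C.hB_add_right, C.hB_add_right,
      C.hB_add_right, C.hB_add_right, C.hB_add_right] at hnorm
    have haa : C.B (C.π f) (C.π f) = 2 := root_norm C.hΦ hf
    have hbb : C.B (C.π g) (C.π g) = 2 := root_norm C.hΦ hg
    have hcc : C.B (C.π h) (C.π h) = 2 := root_norm C.hΦ hh
    have hsa1 : C.B (C.π g) (C.π f) = C.B (C.π f) (C.π g) := C.hB_symm _ _
    have hsa2 : C.B (C.π h) (C.π g) = C.B (C.π g) (C.π h) := C.hB_symm _ _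
    have hsa3 : C.B (C.π f) (C.π h) = C.B (C.π h) (C.π f) := C.hB_symm _ _
    -- exclude value 2 on each pair
    have h2e12 : C.B (C.π f) (C.π g) ≠ 2 := by
      intro h2'
      have heq : C.π f = C.π g :=
        (root_pair_two C.hB_add_left C.hB_add_right C.hB_symm C.hB_pos C.hΦ hf hg).mpr h2'
      have e1 : C.B (C.π h) (C.π f) = C.B (C.π h) (C.π g) := by rw [heq]
      have e2 : C.B (C.π f) (C.π h) = C.B (C.π g) (C.π h) := by rw [heq]
      omega
    have h2e23 : C.B (C.π g) (C.π h) ≠ 2 := by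
      intro h2'
      have heq : C.π g = C.π h :=
        (root_pair_two C.hB_add_left C.hB_add_right C.hB_symm C.hB_pos C.hΦ hg hh).mpr h2'
      have e1 : C.B (C.π f) (C.π g) = C.B (C.π f) (C.π h) := by rw [heq]
      have e2 : C.B (C.π g) (C.π f) = C.B (C.π h) (C.π f) := by rw [heq]
      omega
    have h2e31 : C.B (C.π h) (C.π f) ≠ 2 := by
      intro h2'
      have heq : C.π h = C.π f :=
        (root_pair_two C.hB_add_left C.hB_add_right C.hB_symm C.hB_pos C.hΦ hh hf).mpr h2'
      have e1 : C.B (C.π g) (C.π h) = C.B (C.π g) (C.π f) := by rw [heq]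
      have e2 : C.B (C.π h) (C.π g) = C.B (C.π f) (C.π g) := by rw [heq]
      omega
    have hcase : (C.B (C.π f) (C.π g) = 0 ∧ C.B (C.π g) (C.π h) = -1 ∧
          C.B (C.π h) (C.π f) = -1) ∨
        (C.B (C.π g) (C.π h) = 0 ∧ C.B (C.π h) (C.π f) = -1 ∧
          C.B (C.π f) (C.π g) = -1) ∨
        (C.B (C.π h) (C.π f) = 0 ∧ C.B (C.π f) (C.π g) = -1 ∧
          C.B (C.π g) (C.π h) = -1) := by
      omega
    rcases hcase with ⟨u1, u2, u3⟩ | ⟨u1, u2, u3⟩ | ⟨u1, u2, u3⟩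
    · exact C.L_JC f g h hf hg hh u1 u2 u3 hsr
    · refine rot3 (C.L_JC g h f hg hh hf u1 u2 u3 ?_)
      rw [show C.π g + C.π h + C.π f = C.π f + C.π g + C.π h by abel]
      exact hsr
    · refine rot3' (C.L_JC h f g hh hf hg u1 u2 u3 ?_)
      rw [show C.π h + C.π f + C.π g = C.π f + C.π g + C.π h by abel]
      exact hsr
  · exact C.L_J0 f g h hf hg hh hs0 hsr
lemma brTX' (ff : C.Λ →+ ℤ) (g : C.Λt) (hg : C.π g ∈ C.Φ) :
    C.brH (((1 : C.R) ⊗ₜ[ℤ] ff : C.Tt), (0 : C.Qt)) ((0 : C.Tt), C.XX g hg) =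
      ((0 : C.Tt), ((ff (C.π g) : ℤ) : C.R) • C.XX g hg) := by
  rw [C.brTX, C.act_tmul, one_mul]

lemma brXT' (ff : C.Λ →+ ℤ) (g : C.Λt) (hg : C.π g ∈ C.Φ) :
    C.brH ((0 : C.Tt), C.XX g hg) (((1 : C.R) ⊗ₜ[ℤ] ff : C.Tt), (0 : C.Qt)) =
      ((0 : C.Tt), (-((ff (C.π g) : ℤ) : C.R)) • C.XX g hg) := by
  rw [C.brXT, C.act_tmul, one_mul, neg_smul]

lemma brT_smulX (ff : C.Λ →+ ℤ) (r : C.R) (g : C.Λt) (hg : C.π g ∈ C.Φ) :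
    C.brH (((1 : C.R) ⊗ₜ[ℤ] ff : C.Tt), (0 : C.Qt)) ((0 : C.Tt), r • C.XX g hg) =
      ((0 : C.Tt), (r * ((ff (C.π g) : ℤ) : C.R)) • C.XX g hg) := by
  rw [← C.smul_pair, map_smul, C.brTX, C.act_tmul, one_mul, C.smul_pair, smul_smul]

lemma brX_smulX (k : C.Λt) (hk : C.π k ∈ C.Φ) (r : C.R) (g : C.Λt) (hg : C.π g ∈ C.Φ) :
    C.brH ((0 : C.Tt), C.XX k hk) ((0 : C.Tt), r • C.XX g hg) =
      r • C.pval k g hk hg := by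
  rw [← C.smul_pair, C.br_XH_Xpair]

lemma pval_flip (g h : C.Λt) (hg : C.π g ∈ C.Φ) (hh : C.π h ∈ C.Φ) :
    C.pval h g hh hg = - C.pval g h hg hh :=
  eq_neg_of_add_eq_zero_right (C.pval_antisym g h hg hh)

lemma brT_pval (ff : C.Λ →+ ℤ) (g h : C.Λt) (hg : C.π g ∈ C.Φ) (hh : C.π h ∈ C.Φ) :
    C.brH (((1 : C.R) ⊗ₜ[ℤ] ff : C.Tt), (0 : C.Qt)) (C.pval g h hg hh) =
      (((ff (C.π g) + ff (C.π h) : ℤ)) : C.R) • C.pval g h hg hh := by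
  by_cases h0 : C.π g + C.π h = 0
  · rw [C.pval_zero hg hh h0, map_smul, C.brTT, smul_zero]
    have hz : ff (C.π g) + ff (C.π h) = 0 := by rw [← map_add, h0, map_zero]
    rw [hz]
    norm_num
  · by_cases hs : C.π g + C.π h ∈ C.Φ
    · rw [C.pval_root hg hh hs, map_smul, C.brTX, C.act_tmul, one_mul]
      have harg : ff (C.π (g * h)) = ff (C.π g) + ff (C.π h) := by rw [C.hπ_mul, map_add]
      rw [harg, smul_comm (((ff (C.π g) + ff (C.π h) : ℤ)) : C.R) ((C.eps g h : C.R)),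
        C.smul_pair]
      simp only [C.smul_pair]
    · rw [C.pval_none hg hh h0 hs, map_zero, smul_zero]

-- the generating set of 𝔥
def Sgen : Set C.Ht :=
  {p | (∃ ff : C.Λ →+ ℤ, p = (((1 : C.R) ⊗ₜ[ℤ] ff : C.Tt), (0 : C.Qt))) ∨
    (∃ (g : C.Λt) (hg : C.π g ∈ C.Φ), p = ((0 : C.Tt), C.XX g hg))}

lemma jac_gen : ∀ x ∈ C.Sgen, ∀ y ∈ C.Sgen, ∀ z ∈ C.Sgen,
    C.brH x (C.brH y z) + C.brH y (C.brH z x) + C.brH z (C.brH x y) = 0 := by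
  rintro x (⟨f1, rfl⟩ | ⟨g1, hg1, rfl⟩) y (⟨f2, rfl⟩ | ⟨g2, hg2, rfl⟩) z
      (⟨f3, rfl⟩ | ⟨g3, hg3, rfl⟩)
  · -- TTT
    rw [C.brTT, C.brTT, C.brTT, map_zero, map_zero, map_zero]
    simp
  · -- TTX
    rw [C.brTT, map_zero, C.brTX', C.brT_smulX, C.brXT', C.brT_smulX, add_zero,
      Prod.mk_add_mk, add_zero]
    refine Prod.ext rfl ?_
    show _ = (0 : C.Qt)
    rw [← add_smul]
    convert zero_smul C.R (C.XX g3 hg3) using 2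
    ring
  · -- TXT
    rw [C.brTT, map_zero, C.brXT', C.brT_smulX, C.brTX', C.brT_smulX, add_zero,
      Prod.mk_add_mk, zero_add]
    refine Prod.ext rfl ?_
    show _ = (0 : C.Qt)
    rw [← add_smul]
    convert zero_smul C.R (C.XX g2 hg2) using 2
    ring
  · -- TXX
    rw [C.brXX, C.PQQ_XX, C.brT_pval, C.brXT', C.brX_smulX, C.brTX', C.brX_smulX,
      C.pval_flip g3 g2 hg3 hg2]
    push_cast
    module
  · -- XTT
    rw [C.brTT, map_zero, C.brTX', C.brT_smulX, C.brXT', C.brT_smulX, zero_add]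
    rw [Prod.mk_add_mk, add_zero]
    refine Prod.ext rfl ?_
    show _ = (0 : C.Qt)
    rw [← add_smul]
    convert zero_smul C.R (C.XX g1 hg1) using 2
    ring
  · -- XTX
    rw [C.brTX', C.brX_smulX, C.brXX, C.PQQ_XX, C.brT_pval, C.brXT', C.brX_smulX,
      C.pval_flip g3 g1 hg3 hg1]
    push_cast
    module
  · -- XXT
    rw [C.brXT', C.brX_smulX, C.brTX', C.brX_smulX, C.brXX, C.PQQ_XX, C.brT_pval,
      C.pval_flip g2 g1 hg2 hg1]
    push_cast
    module
  · -- XXX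
    rw [C.brXX, C.PQQ_XX, C.brXX, C.PQQ_XX, C.brXX, C.PQQ_XX]
    exact C.L_XXX g1 g2 g3 hg1 hg2 hg3
lemma Sgen_span : Submodule.span C.R C.Sgen = ⊤ := by
  rw [Submodule.eq_top_iff']
  intro x
  have hT : ∀ t : C.Tt, ((t, (0 : C.Qt)) : C.Ht) ∈ Submodule.span C.R C.Sgen := by
    intro t
    induction t using TensorProduct.induction_on with
    | zero => exact Submodule.zero_mem _
    | tmul r f =>
        have he : ((r ⊗ₜ[ℤ] f : C.Tt), (0 : C.Qt)) =
            r • (((1 : C.R) ⊗ₜ[ℤ] f : C.Tt), (0 : C.Qt)) := by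
          rw [C.smul_pairT, TensorProduct.smul_tmul', smul_eq_mul, mul_one]
        rw [he]
        exact Submodule.smul_mem _ _ (Submodule.subset_span (Or.inl ⟨f, rfl⟩))
    | add a b ha hb =>
        have he : ((a + b : C.Tt), (0 : C.Qt)) = (a, (0 : C.Qt)) + (b, (0 : C.Qt)) := by
          rw [Prod.mk_add_mk, add_zero]
        rw [he]
        exact Submodule.add_mem _ ha hb
  have hQ : ∀ q : C.Qt, (((0 : C.Tt), q) : C.Ht) ∈ Submodule.span C.R C.Sgen := by
    intro q
    obtain ⟨v, rfl⟩ := Submodule.Quotient.mk_surjective _ q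
    induction v using Finsupp.induction with
    | zero =>
        have : ((Submodule.Quotient.mk (0 : C.Fr) : C.Qt)) = 0 := by
          rw [Submodule.Quotient.mk_eq_zero]
          exact Submodule.zero_mem _
        rw [this]
        exact Submodule.zero_mem _
    | single_add a b f hfa hb ih =>
        have hsingle : (Finsupp.single a b : C.Fr) = b • Finsupp.single a 1 := by
          rw [Finsupp.smul_single, smul_eq_mul, mul_one]
        have he : (((0 : C.Tt), (Submodule.Quotient.mk (Finsupp.single a b + f) : C.Qt)) : C.Ht) =
            b • ((0 : C.Tt), C.XX a.1 a.2) + ((0 : C.Tt), (Submodule.Quotient.mk f : C.Qt)) := by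
          rw [C.smul_pair, Prod.mk_add_mk, add_zero]
          congr 1
          rw [Submodule.Quotient.mk_add, hsingle, Submodule.Quotient.mk_smul]
          rfl
        rw [he]
        exact Submodule.add_mem _
          (Submodule.smul_mem _ _ (Submodule.subset_span (Or.inr ⟨a.1, a.2, rfl⟩))) ih
  have hx : x = (x.1, (0 : C.Qt)) + ((0 : C.Tt), x.2) := by
    rw [Prod.mk_add_mk, add_zero, zero_add]
  rw [hx]
  exact Submodule.add_mem _ (hT x.1) (hQ x.2)

lemma jacobi_full (x y z : C.Ht) :
    C.brH x (C.brH y z) + C.brH y (C.brH z x) + C.brH z (C.brH x y) = 0 := by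
  have step1 : ∀ x ∈ C.Sgen, ∀ y ∈ C.Sgen, ∀ z : C.Ht,
      C.brH x (C.brH y z) + C.brH y (C.brH z x) + C.brH z (C.brH x y) = 0 := by
    intro x hx y hy z
    have hmap : (C.brH x).comp (C.brH y) + (C.brH y).comp (C.brH.flip x) +
        C.brH.flip (C.brH x y) = (0 : C.Ht →ₗ[C.R] C.Ht) := by
      apply LinearMap.ext_on C.Sgen_span
      intro zz hz
      have hj := C.jac_gen x hx y hy zz hz
      simpa only [LinearMap.add_apply, LinearMap.comp_apply, LinearMap.flip_apply,
        LinearMap.zero_apply] using hj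
    have hz := LinearMap.congr_fun hmap z
    simpa only [LinearMap.add_apply, LinearMap.comp_apply, LinearMap.flip_apply,
      LinearMap.zero_apply] using hz
  have step2 : ∀ x ∈ C.Sgen, ∀ y z : C.Ht,
      C.brH x (C.brH y z) + C.brH y (C.brH z x) + C.brH z (C.brH x y) = 0 := by
    intro x hx y z
    have hmap : (C.brH x).comp (C.brH.flip z) + C.brH.flip (C.brH z x) +
        (C.brH z).comp (C.brH x) = (0 : C.Ht →ₗ[C.R] C.Ht) := by
      apply LinearMap.ext_on C.Sgen_span
      intro yy hy
      have hj := step1 x hx yy hy z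
      simpa only [LinearMap.add_apply, LinearMap.comp_apply, LinearMap.flip_apply,
        LinearMap.zero_apply] using hj
    have hy := LinearMap.congr_fun hmap y
    simpa only [LinearMap.add_apply, LinearMap.comp_apply, LinearMap.flip_apply,
      LinearMap.zero_apply] using hy
  have hmap : C.brH.flip (C.brH y z) + (C.brH y).comp (C.brH z) +
      (C.brH z).comp (C.brH.flip y) = (0 : C.Ht →ₗ[C.R] C.Ht) := by
    apply LinearMap.ext_on C.Sgen_span
    intro xx hx
    have hj := step2 xx hx y z
    simpa only [LinearMap.add_apply, LinearMap.comp_apply, LinearMap.flip_apply,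
      LinearMap.zero_apply] using hj
  have hx := LinearMap.congr_fun hmap x
  simpa only [LinearMap.add_apply, LinearMap.comp_apply, LinearMap.flip_apply,
    LinearMap.zero_apply] using hx
lemma main (C : Ctx) :
    ∃ br : C.Ht →ₗ[C.R] C.Ht →ₗ[C.R] C.Ht,
      (∀ t t' : C.Tt, br (t, 0) (t', 0) = 0) ∧
      (∀ α ∈ C.Φ, ∀ (g : C.Λt) (hg : C.π g ∈ C.Φ),
          br (C.chk α, 0) (0, C.XX g hg) =
            ((C.B α (C.π g) : ℤ) : C.R) • ((0 : C.Tt), C.XX g hg) ∧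
          br ((0 : C.Tt), C.XX g hg) (C.chk α, 0) =
            -(((C.B α (C.π g) : ℤ) : C.R) • ((0 : C.Tt), C.XX g hg))) ∧
      (∀ (g g' : C.Λt) (hg : C.π g ∈ C.Φ) (hg' : C.π g' ∈ C.Φ),
          (C.π g + C.π g' = 0 →
            br ((0 : C.Tt), C.XX g hg) ((0 : C.Tt), C.XX g' hg') =
              (-(C.ν (g * g'))) • (C.chk (C.π g), (0 : C.Qt))) ∧
          (∀ hs : C.π g + C.π g' ∈ C.Φ,
            br ((0 : C.Tt), C.XX g hg) ((0 : C.Tt), C.XX g' hg') =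
              ((((-1 : C.Rˣ) ^ (C.B (C.π g) (C.w (C.π g'))) *
                  C.ζ ^ (C.B (C.π g - C.w (C.π g)) (C.π g')) : C.Rˣ) : C.R)) •
                ((0 : C.Tt), C.XX (g * g') (by rw [C.hπ_mul]; exact hs))) ∧
          (C.π g + C.π g' ≠ 0 → (C.π g + C.π g') ∉ C.Φ →
            br ((0 : C.Tt), C.XX g hg) ((0 : C.Tt), C.XX g' hg') = 0)) ∧
      (∀ x : C.Ht, br x x = 0) ∧
      (∀ x y z : C.Ht, br x (br y z) + br y (br z x) + br z (br x y) = 0) := by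
  refine ⟨C.brH, ?_, ?_, ?_, C.brH_alt, C.jacobi_full⟩
  · intro t t'
    exact C.brTT t t'
  · intro α hα g hg
    constructor
    · rw [C.brTX, C.act_chk, C.smul_pair]
    · rw [C.brXT, C.act_chk, C.smul_pair, Prod.neg_mk, neg_zero]
  · intro g g' hg hg'
    refine ⟨?_, ?_, ?_⟩
    · intro h0
      rw [C.brXX, C.PQQ_XX, C.pval_zero hg hg' h0]
    · intro hs
      rw [C.brXX, C.PQQ_XX, C.pval_root hg hg' hs]
      rfl
    · intro h0 hs
      rw [C.brXX, C.PQQ_XX, C.pval_none hg hg' h0 hs]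

end Ctx

/-- Given an `E₈`-type simply-laced even lattice `(Λ, B)` with roots
`Φ = {α : B(α,α) = 2}`, a fixed-point-free isometry `w` of order 3 (so `w²γ + wγ + γ = 0`),
a base ring `R` in which `2·3·5·7` is invertible with a primitive cube root of unity `ζ`,
and a central extension `1 → μ₃ → Λ̃ → Λ → 1` with commutator `ζ^{B((1−w)α, β)}`,
the bracket defined on `𝔥 = 𝔱 ⊕ 𝔥₁` (with `𝔱 = Hom(Λ,ℤ) ⊗ R` and `𝔥₁` the quotient of the
free `R`-module on `X_{α̃}`, `α̃ ∈ Φ̃ = π⁻¹(Φ)`, by the relations `X_{zα̃} = z·X_{α̃}` for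
`z ∈ μ₃`) by
  `[𝔱, 𝔱] = 0`, `[α̌, X_{β̃}] = B(α,β)·X_{β̃} = −[X_{β̃}, α̌]`,
  `[X_{α̃}, X_{β̃}] = −(α̃β̃)·α̌` if `α + β = 0`,
  `[X_{α̃}, X_{β̃}] = (−1)^{B(α,wβ)}·ζ^{B((1−w)α,β)}·X_{α̃β̃}` if `α + β ∈ Φ`,
  `[X_{α̃}, X_{β̃}] = 0` otherwise,
is well defined (it respects the relations), is alternating, and satisfies the Jacobi
identity; thus `𝔥` is a Lie algebra over `R`. -/
theorem stmt_0
    (Λ : Type) [AddCommGroup Λ] [Module.Free ℤ Λ] [Module.Finite ℤ Λ]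
    (B : Λ → Λ → ℤ)
    (hB_add_left : ∀ x y z : Λ, B (x + y) z = B x z + B y z)
    (hB_add_right : ∀ x y z : Λ, B x (y + z) = B x y + B x z)
    (hB_symm : ∀ x y : Λ, B x y = B y x)
    (hB_pos : ∀ x : Λ, x ≠ 0 → 0 < B x x)
    (Φ : Set Λ)
    (hΦ : Φ = {α : Λ | B α α = 2})
    (h_laced : ∀ α ∈ Φ, ∀ β ∈ Φ, ((α + β) ∈ Φ ↔ B α β = -1))
    (w : Λ →+ Λ)
    (hwB : ∀ x y : Λ, B (w x) (w y) = B x y)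
    (hw_ell : ∀ γ : Λ, w (w γ) + w γ + γ = 0)
    (R : Type) [CommRing R]
    (h210 : IsUnit (210 : R))
    (ζ : Rˣ) (hζ : 1 + (ζ : R) + (ζ : R) ^ 2 = 0)
    (Λt : Type) [Group Λt]
    (π : Λt → Λ)
    (hπ_mul : ∀ a b : Λt, π (a * b) = π a + π b)
    (hπ_surj : Function.Surjective π)
    (c : Λt) (hc_ker : π c = 0)
    (hc_central : ∀ g : Λt, c * g = g * c)
    (hc_order : c ^ 3 = 1)
    (h_ker : ∀ g : Λt, π g = 0 → g = 1 ∨ g = c ∨ g = c ^ 2)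
    (ν : Λt → R)
    (hν_one : ν 1 = 1) (hν_c : ν c = (ζ : R)) (hν_c2 : ν (c ^ 2) = (ζ : R) ^ 2)
    (h_comm : ∀ a b : Λt, a * b * a⁻¹ * b⁻¹ = c ^ (B (π a - w (π a)) (π b))) :
    -- the Cartan subalgebra 𝔱 = Hom(Λ, ℤ) ⊗ R
    let T := R ⊗[ℤ] (Λ →+ ℤ)
    -- the coroot α̌ = B(α, ·), viewed in 𝔱
    let chk : Λ → T := fun α =>
      (1 : R) ⊗ₜ[ℤ] (AddMonoidHom.mk' (fun x => B α x) (fun x y => hB_add_right α x y))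
    -- 𝔥₁: quotient of the free R-module on Φ̃ = π⁻¹(Φ) by the relations X_{zα̃} = z·X_{α̃}
    let Rel : Submodule R ({g : Λt // π g ∈ Φ} →₀ R) := Submodule.span R
      {v : {g : Λt // π g ∈ Φ} →₀ R |
        ∃ (z g : Λt) (hz : π z = 0) (hg : π g ∈ Φ),
          v = Finsupp.single ⟨z * g, by rw [hπ_mul, hz, zero_add]; exact hg⟩ (1 : R) -
              ν z • Finsupp.single ⟨g, hg⟩ (1 : R)}
    let Q := ({g : Λt // π g ∈ Φ} →₀ R) ⧸ Rel
    -- the image X_{α̃} of a basis vector in 𝔥₁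
    let X : (g : Λt) → π g ∈ Φ → Q := fun g hg =>
      Submodule.Quotient.mk (Finsupp.single ⟨g, hg⟩ (1 : R))
    -- 𝔥 = 𝔱 ⊕ 𝔥₁
    let H := T × Q
    -- there is a well-defined R-bilinear bracket satisfying the defining formulas,
    -- which is alternating and satisfies the Jacobi identity
    ∃ br : H →ₗ[R] H →ₗ[R] H,
      (∀ t t' : T, br (t, 0) (t', 0) = 0) ∧
      (∀ α ∈ Φ, ∀ (g : Λt) (hg : π g ∈ Φ),
          br (chk α, 0) (0, X g hg) = (B α (π g) : R) • ((0 : T), X g hg) ∧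
          br ((0 : T), X g hg) (chk α, 0) = -((B α (π g) : R) • ((0 : T), X g hg))) ∧
      (∀ (g g' : Λt) (hg : π g ∈ Φ) (hg' : π g' ∈ Φ),
          (π g + π g' = 0 →
            br ((0 : T), X g hg) ((0 : T), X g' hg') =
              (-(ν (g * g'))) • (chk (π g), (0 : Q))) ∧
          (∀ hs : π g + π g' ∈ Φ,
            br ((0 : T), X g hg) ((0 : T), X g' hg') =
              ((((-1 : Rˣ) ^ (B (π g) (w (π g'))) *
                  ζ ^ (B (π g - w (π g)) (π g')) : Rˣ) : R)) •
                ((0 : T), X (g * g') (by rw [hπ_mul]; exact hs))) ∧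
          (π g + π g' ≠ 0 → (π g + π g') ∉ Φ →
            br ((0 : T), X g hg) ((0 : T), X g' hg') = 0)) ∧
      (∀ x : H, br x x = 0) ∧
      (∀ x y z : H, br x (br y z) + br y (br z x) + br z (br x y) = 0) := by
  intro T chk Rel Q X H
  have h2u : IsUnit (2 : R) := isUnit_of_dvd_unit ⟨105, by norm_num⟩ h210
  exact Ctx.main
    { Λ := Λ, B := B, hB_add_left := hB_add_left, hB_add_right := hB_add_right,
      hB_symm := hB_symm, hB_pos := hB_pos, Φ := Φ, hΦ := hΦ, h_laced := h_laced, w := w,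
      hwB := hwB, hw_ell := hw_ell, R := R, h2 := h2u, ζ := ζ, hζ := hζ, Λt := Λt, π := π,
      hπ_mul := hπ_mul, c := c, hc_ker := hc_ker, hc_central := hc_central,
      hc_order := hc_order, h_ker := h_ker, ν := ν, hν_one := hν_one, hν_c := hν_c,
      hν_c2 := hν_c2, h_comm := h_comm }
end

section
/- If α, β ∈ Λ satisfy B(α, β) = −1 (as holds whenever α, β and α + β are all roots of a simply-laced root lattice such as E₈), then (−1)^{B(α, wβ)} + (−1)^{B(wα, β)} = 0; equivalently, B(α, wβ) + B(wα, β) is odd. -/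
/-- Λ is a ℤ-module with a symmetric bilinear form `B`, and `w` is a ℤ-linear
map preserving `B` and satisfying `w²x + wx + x = 0` for all `x` (elliptic of order 3).
If `B α β = -1`, then `(-1)^{B(α,wβ)} + (-1)^{B(wα,β)} = 0`; equivalently,
`B(α,wβ) + B(wα,β)` is odd. -/
theorem stmt_1 (Λ : Type*) [AddCommGroup Λ] (B : Λ → Λ → ℤ)
    (hB_add_left : ∀ x y z : Λ, B (x + y) z = B x z + B y z)
    (hB_add_right : ∀ x y z : Λ, B x (y + z) = B x y + B x z)
    (hB_symm : ∀ x y : Λ, B x y = B y x)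
    (w : Λ →+ Λ)
    (hwB : ∀ x y : Λ, B (w x) (w y) = B x y)
    (hw_ell : ∀ x : Λ, w (w x) + w x + x = 0)
    (α β : Λ) (hαβ : B α β = -1) :
    (((-1 : ℤˣ) ^ (B α (w β)) : ℤˣ) : ℤ) + (((-1 : ℤˣ) ^ (B (w α) β) : ℤˣ) : ℤ) = 0 ∧
      Odd (B α (w β) + B (w α) β) := by
  have hzero : ∀ y : Λ, B 0 y = 0 := by
    intro y
    have := hB_add_left 0 0 y
    simp at this
    linarith
  have hneg : ∀ x y : Λ, B (-x) y = -B x y := by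
    intro x y
    have := hB_add_left x (-x) y
    simp [hzero] at this
    linarith
  -- key: exponents sum to 1
  have hw2 : w (w α) = -w α + -α := by
    have := hw_ell α
    abel_nf
    abel_nf at this
    linear_combination (norm := abel) this
  have key : B α (w β) + B (w α) β = 1 := by
    have h1 : B (w (w α)) (w β) = B (w α) β := hwB (w α) β
    rw [hw2, hB_add_left, hneg, hneg, hwB] at h1
    linarith
  constructor
  · have hb : B (w α) β = 1 - B α (w β) := by linarith
    rw [hb]
    have : ((-1 : ℤˣ) ^ (1 - B α (w β))) = -((-1 : ℤˣ) ^ (B α (w β))) := by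
      rw [zpow_sub, zpow_one, Int.units_inv_eq_self, neg_one_mul]
    rw [this]
    push_cast
    ring
  · rw [key]; exact odd_one
end

section
/- Let M₀″ ⊆ M₀′ be nonempty closed subsets of Φ_V, let M₁′ ⊆ Φ_V ∖ M₀′, and let f′ : M₁′ → ℝ≥0 satisfy Σ_{α∈M₁′} f′(α) < |M₀′| and, for every i ∈ {1,…,8}, Nᵢ − Σ_{α∈M₀′} nᵢ(α) + Σ_{α∈M₁′} f′(α)·nᵢ(α) > 0. Suppose g : (M₀′ ∖ M₀″) → M₁′ is a function such that: (1) for every α ∈ M₀′ ∖ M₀″ there exist j < l with j ∈ g(α), l ∉ g(α) and α = (g(α) ∖ {j}) ∪ {l} (i.e. the weight difference α − g(α) is a positive root t_l/t_j of SL₉); and (2) f′(α) ≥ |g⁻¹(α)| for every α ∈ M₁′. Then P(M₀) holds for every closed subset M₀ of Φ_V with M₀″ ⊆ M₀ ⊆ M₀′. -/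
/-- `Φ_V`: the set of all 3-element subsets of `{1,…,9}`, the weights of the
`SL₉`-representation `∧³(ℚ⁹)` (the subset `{i,j,k}` stands for the character `tᵢtⱼtₖ`). -/
def PhiV : Finset (Finset ℕ) := Finset.powersetCard 3 (Finset.Icc 1 9)

/-- The componentwise partial order on weights: for `A = {a₁<a₂<a₃}`, `B = {b₁<b₂<b₃}`,
`A ≤ B` iff `a₁ ≤ b₁`, `a₂ ≤ b₂` and `a₃ ≤ b₃`. -/
def leW (A B : Finset ℕ) : Prop :=
  List.Forall₂ (· ≤ ·) (Finset.sort A (· ≤ ·)) (Finset.sort B (· ≤ ·))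

/-- A subset `M ⊆ Φ_V` is closed if `A ∈ M`, `B ∈ Φ_V` and `A ≤ B` imply `B ∈ M`. -/
def IsClosedW (M : Finset (Finset ℕ)) : Prop :=
  ∀ A ∈ M, ∀ B ∈ PhiV, leW A B → B ∈ M

/-- `nᵢ(α) = i/3 − |{x ∈ α : x ≤ i}|`, the pairing of the weight `α` with the `i`-th
fundamental coweight of `SL₉` for the simple roots `βᵢ = t_{i+1}/tᵢ`. -/
noncomputable def nW (i : ℕ) (A : Finset ℕ) : ℝ :=
  (i : ℝ) / 3 - ((A.filter (fun x => x ≤ i)).card : ℝ)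

/-- `Nᵢ = i(9−i)`, the pairing of the sum of the positive roots of `SL₉` with the `i`-th
fundamental coweight. -/
noncomputable def NW (i : ℕ) : ℝ := (i : ℝ) * (9 - (i : ℝ))

/-- `P(M₀)`: there exist `M₁ ⊆ Φ_V ∖ M₀` and `f : M₁ → ℝ≥0` with `Σ_{α∈M₁} f(α) < |M₀|`
such that `Nᵢ − Σ_{α∈M₀} nᵢ(α) + Σ_{α∈M₁} f(α)·nᵢ(α) > 0` for every `i ∈ {1,…,8}`. -/
noncomputable def PW (M₀ : Finset (Finset ℕ)) : Prop :=
  ∃ (M₁ : Finset (Finset ℕ)) (f : Finset ℕ → ℝ),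
    M₁ ⊆ PhiV \ M₀ ∧ (∀ α ∈ M₁, 0 ≤ f α) ∧
    (∑ α ∈ M₁, f α) < (M₀.card : ℝ) ∧
    ∀ i ∈ Finset.Icc 1 8,
      0 < NW i - (∑ α ∈ M₀, nW i α) + ∑ α ∈ M₁, f α * nW i α

/-- `S_H`, a root basis of `E₈` consisting of weights of `∧³(ℚ⁹)`. -/
def SH : Finset (Finset ℕ) :=
  {{2, 6, 7}, {2, 5, 8}, {3, 4, 8}, {1, 6, 9}, {3, 5, 7}, {2, 4, 9}, {1, 7, 8}, {4, 5, 6}}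

/-- `Φ_V⁺ = {α ∈ Φ_V : γ ≤ α for some γ ∈ S_H}`. -/
noncomputable def PhiVplus : Finset (Finset ℕ) :=
  @Finset.filter _ (fun A => ∃ γ ∈ SH, leW γ A) (fun _ => Classical.propDecidable _) PhiV

/-- Let `M₀″ ⊆ M₀′` be nonempty closed subsets of `Φ_V`, `M₁′ ⊆ Φ_V ∖ M₀′`,
and `f′ : M₁′ → ℝ≥0` with `Σ f′ < |M₀′|` and `Nᵢ − Σ_{M₀′} nᵢ + Σ_{M₁′} f′·nᵢ > 0` for all
`i ∈ {1,…,8}`. If `g : (M₀′ ∖ M₀″) → M₁′` satisfies (1) `α − g(α)` is a positive root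
`t_l/t_j` of `SL₉` (i.e. `α = (g(α) ∖ {j}) ∪ {l}` with `j ∈ g(α)`, `l ∉ g(α)`, `j < l`)
for each `α ∈ M₀′ ∖ M₀″` and (2) `f′(α) ≥ |g⁻¹(α)|` for each `α ∈ M₁′`, then `P(M₀)` holds
for every closed `M₀` with `M₀″ ⊆ M₀ ⊆ M₀′`. -/
theorem stmt_3 (M₀'' M₀' : Finset (Finset ℕ))
    (hsub' : M₀' ⊆ PhiV) (hsub'' : M₀'' ⊆ M₀')
    (hne'' : M₀''.Nonempty) (hne' : M₀'.Nonempty)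
    (hclosed'' : IsClosedW M₀'') (hclosed' : IsClosedW M₀')
    (M₁' : Finset (Finset ℕ)) (hM₁' : M₁' ⊆ PhiV \ M₀')
    (f' : Finset ℕ → ℝ) (hf'0 : ∀ α ∈ M₁', 0 ≤ f' α)
    (hf'sum : (∑ α ∈ M₁', f' α) < (M₀'.card : ℝ))
    (hf'pos : ∀ i ∈ Finset.Icc 1 8,
      0 < NW i - (∑ α ∈ M₀', nW i α) + ∑ α ∈ M₁', f' α * nW i α)
    (g : Finset ℕ → Finset ℕ)
    (hg_mem : ∀ α ∈ M₀' \ M₀'', g α ∈ M₁')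
    (hg_root : ∀ α ∈ M₀' \ M₀'', ∃ j l : ℕ, j < l ∧ j ∈ g α ∧ l ∉ g α ∧
        α = insert l ((g α).erase j))
    (hg_fiber : ∀ α ∈ M₁', (((M₀' \ M₀'').filter (fun β => g β = α)).card : ℝ) ≤ f' α) :
    ∀ M₀ : Finset (Finset ℕ), IsClosedW M₀ → M₀'' ⊆ M₀ → M₀ ⊆ M₀' → PW M₀ := by
  intro M₀ _hclosed hM₀'' hM₀'
  classical
  set D := M₀' \ M₀ with hDdef
  have hDsub : D ⊆ M₀' \ M₀'' := by
    intro β hβ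
    rw [hDdef, Finset.mem_sdiff] at hβ
    exact Finset.mem_sdiff.2 ⟨hβ.1, fun h => hβ.2 (hM₀'' h)⟩
  have hkey : ∀ β ∈ M₀' \ M₀'', ∀ i : ℕ, nW i (g β) ≤ nW i β := by
    intro β hβ i
    obtain ⟨j, l, hjl, hj, hl, hβeq⟩ := hg_root β hβ
    have hcard : (β.filter (fun x => x ≤ i)).card ≤ ((g β).filter (fun x => x ≤ i)).card := by
      conv_lhs => rw [hβeq]
      rw [Finset.filter_insert, Finset.filter_erase]
      by_cases hli : l ≤ i
      · rw [if_pos hli]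
        have hji : j ∈ (g β).filter (fun x => x ≤ i) :=
          Finset.mem_filter.2 ⟨hj, le_of_lt (lt_of_lt_of_le hjl hli)⟩
        have hlnot : l ∉ ((g β).filter (fun x => x ≤ i)).erase j := fun h =>
          hl (Finset.mem_filter.1 (Finset.mem_of_mem_erase h)).1
        rw [Finset.card_insert_of_notMem hlnot, Finset.card_erase_of_mem hji]
        have h1 : 0 < ((g β).filter (fun x => x ≤ i)).card :=
          Finset.card_pos.2 ⟨j, hji⟩
        omega
      · rw [if_neg hli]
        exact Finset.card_erase_le
    have hc : ((β.filter (fun x => x ≤ i)).card : ℝ)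
        ≤ (((g β).filter (fun x => x ≤ i)).card : ℝ) := Nat.cast_le.2 hcard
    unfold nW
    linarith
  have hmaps : ∀ β ∈ D, g β ∈ M₁' := fun β hβ => hg_mem β (hDsub hβ)
  have hfib1 : ∑ α ∈ M₁', ((D.filter (fun β => g β = α)).card : ℝ) = (D.card : ℝ) := by
    calc ∑ α ∈ M₁', ((D.filter (fun β => g β = α)).card : ℝ)
        = ∑ α ∈ M₁', ∑ _β ∈ D.filter (fun β => g β = α), (1 : ℝ) := by
          simp
      _ = ∑ _β ∈ D, (1 : ℝ) := Finset.sum_fiberwise_of_maps_to hmaps _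
      _ = (D.card : ℝ) := by simp
  have hfibnn : ∀ α ∈ M₁', ((D.filter (fun β => g β = α)).card : ℝ) ≤ f' α := by
    intro α hα
    have hsub : D.filter (fun β => g β = α) ⊆ (M₀' \ M₀'').filter (fun β => g β = α) :=
      Finset.filter_subset_filter _ hDsub
    have := (Nat.cast_le (α := ℝ)).2 (Finset.card_le_card hsub)
    exact le_trans this (hg_fiber α hα)
  have hDcard : (D.card : ℝ) = (M₀'.card : ℝ) - (M₀.card : ℝ) := by
    rw [hDdef, Finset.card_sdiff_of_subset hM₀']
    rw [Nat.cast_sub (Finset.card_le_card hM₀')]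
  refine ⟨M₁', fun α => f' α - ((D.filter (fun β => g β = α)).card : ℝ), ?_, ?_, ?_, ?_⟩
  · intro α hα
    have h := Finset.mem_sdiff.1 (hM₁' hα)
    exact Finset.mem_sdiff.2 ⟨h.1, fun hm => h.2 (hM₀' hm)⟩
  · intro α hα
    dsimp only
    have := hfibnn α hα
    linarith
  · dsimp only
    rw [Finset.sum_sub_distrib, hfib1, hDcard]
    linarith
  · intro i hi
    have hbase := hf'pos i hi
    have hfib2 : ∑ α ∈ M₁', ((D.filter (fun β => g β = α)).card : ℝ) * nW i α
        = ∑ β ∈ D, nW i (g β) := by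
      calc ∑ α ∈ M₁', ((D.filter (fun β => g β = α)).card : ℝ) * nW i α
          = ∑ α ∈ M₁', ∑ β ∈ D.filter (fun β => g β = α), nW i (g β) := by
            refine Finset.sum_congr rfl fun α hα => ?_
            rw [Finset.sum_congr rfl (fun β hβ => by
              rw [(Finset.mem_filter.1 hβ).2])]
            rw [Finset.sum_const, nsmul_eq_mul]
        _ = ∑ β ∈ D, nW i (g β) := Finset.sum_fiberwise_of_maps_to hmaps _
    have hsplit : (∑ β ∈ D, nW i β) + ∑ α ∈ M₀, nW i α = ∑ α ∈ M₀', nW i α :=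
      Finset.sum_sdiff hM₀'
    have hle : ∑ β ∈ D, nW i (g β) ≤ ∑ β ∈ D, nW i β :=
      Finset.sum_le_sum fun β hβ => hkey β (hDsub hβ) i
    dsimp only
    have hexp : ∑ α ∈ M₁', (f' α - ((D.filter (fun β => g β = α)).card : ℝ)) * nW i α
        = (∑ α ∈ M₁', f' α * nW i α) - ∑ β ∈ D, nW i (g β) := by
      rw [← hfib2, ← Finset.sum_sub_distrib]
      exact Finset.sum_congr rfl fun α _ => by ring
    rw [hexp]
    linarith
end

section
/- If M₀ is a nonempty closed subset of Φ_V with |M₀| ≤ 10, then for every i ∈ {1,…,8} one has Σ_{α∈M₀} nᵢ(α) < Nᵢ; that is, the pairing of (Σ_{positive roots of SL₉} α) − (Σ_{α∈M₀} α) with each fundamental coweight of SL₉ is strictly positive. -/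
lemma phiV_mem {α : Finset ℕ} (h : α ∈ PhiV) : α ⊆ Finset.Icc 1 9 ∧ α.card = 3 := by
  simpa [PhiV, Finset.mem_powersetCard] using h

lemma filter_ge (i : ℕ) {α : Finset ℕ} (h : α ∈ PhiV) :
    3 - (9 - i) ≤ (α.filter (fun x => x ≤ i)).card := by
  obtain ⟨hsub, hcard⟩ := phiV_mem h
  have h1 : (α.filter (fun x => ¬ x ≤ i)).card ≤ 9 - i := by
    have hs : α.filter (fun x => ¬ x ≤ i) ⊆ Finset.Icc (i+1) 9 := by
      intro x hx
      simp only [Finset.mem_filter] at hx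
      have := hsub hx.1
      simp only [Finset.mem_Icc] at this ⊢
      omega
    calc (α.filter (fun x => ¬ x ≤ i)).card ≤ (Finset.Icc (i+1) 9).card :=
          Finset.card_le_card hs
      _ ≤ 9 - i := by rw [Nat.card_Icc]; omega
  have h2 := Finset.card_filter_add_card_filter_not (s := α) (p := fun x => x ≤ i)
  omega

lemma nW_le_third (i : ℕ) (α : Finset ℕ) : nW i α ≤ (i : ℝ) / 3 := by
  unfold nW
  have : (0 : ℝ) ≤ ((α.filter (fun x => x ≤ i)).card : ℝ) := Nat.cast_nonneg _
  linarith

lemma nW_le_of_card (i k : ℕ) {α : Finset ℕ} (h : k ≤ (α.filter (fun x => x ≤ i)).card) :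
    nW i α ≤ (i : ℝ) / 3 - (k : ℝ) := by
  unfold nW
  have : (k : ℝ) ≤ ((α.filter (fun x => x ≤ i)).card : ℝ) := by exact_mod_cast h
  linarith

lemma nW6_lt_two {α : Finset ℕ} (h : α ∈ PhiV) (hne : α ≠ ({7, 8, 9} : Finset ℕ)) :
    nW 6 α ≤ 1 := by
  obtain ⟨hsub, hcard⟩ := phiV_mem h
  have : 1 ≤ (α.filter (fun x => x ≤ 6)).card := by
    by_contra hcon
    push_neg at hcon
    interval_cases hc : (α.filter (fun x => x ≤ 6)).card
    have hemp : α.filter (fun x => x ≤ 6) = ∅ := Finset.card_eq_zero.mp hc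
    have hs : α ⊆ ({7, 8, 9} : Finset ℕ) := by
      intro x hx
      have hx9 := hsub hx
      simp only [Finset.mem_Icc] at hx9
      have : ¬ x ≤ 6 := by
        intro hx6
        have : x ∈ α.filter (fun x => x ≤ 6) := Finset.mem_filter.mpr ⟨hx, hx6⟩
        simp [hemp] at this
      simp only [Finset.mem_insert, Finset.mem_singleton]
      omega
    exact hne (Finset.eq_of_subset_of_card_le hs (by rw [hcard]; decide))
  have h6 := nW_le_of_card 6 1 this
  norm_num at h6
  linarith

/-- If `M₀` is a nonempty closed subset of `Φ_V` with `|M₀| ≤ 10`, then for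
every `i ∈ {1,…,8}` one has `Σ_{α∈M₀} nᵢ(α) < Nᵢ`; that is, the pairing of
`(Σ_{positive roots of SL₉} α) − (Σ_{α∈M₀} α)` with each fundamental coweight of `SL₉` is
strictly positive. -/
theorem stmt_4 (M₀ : Finset (Finset ℕ))
    (hsub : M₀ ⊆ PhiV) (hne : M₀.Nonempty) (hclosed : IsClosedW M₀)
    (hcard : M₀.card ≤ 10) :
    ∀ i ∈ Finset.Icc 1 8, (∑ α ∈ M₀, nW i α) < NW i := by
  intro i hi
  have hcardR : (M₀.card : ℝ) ≤ 10 := by exact_mod_cast hcard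
  have hcard0 : (0 : ℝ) ≤ (M₀.card : ℝ) := Nat.cast_nonneg _
  simp only [Finset.mem_Icc] at hi
  obtain ⟨hi1, hi2⟩ := hi
  -- a generic bound: if nW i α ≤ b for all α ∈ M₀ then sum ≤ card * b
  have sum_le : ∀ b : ℝ, 0 ≤ b → (∀ α ∈ M₀, nW i α ≤ b) →
      (∑ α ∈ M₀, nW i α) ≤ 10 * b := by
    intro b hb hball
    calc (∑ α ∈ M₀, nW i α) ≤ ∑ _α ∈ M₀, b := Finset.sum_le_sum hball
      _ = (M₀.card : ℝ) * b := by rw [Finset.sum_const, nsmul_eq_mul]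
      _ ≤ 10 * b := by nlinarith
  interval_cases i
  · -- i = 1
    have := sum_le (1/3) (by norm_num) (fun α _ => by simpa using nW_le_third 1 α)
    simp only [NW]; norm_num at this ⊢; linarith
  · have := sum_le (2/3) (by norm_num) (fun α _ => by simpa using nW_le_third 2 α)
    simp only [NW]; norm_num at this ⊢; linarith
  · have := sum_le 1 (by norm_num) (fun α _ => by simpa using nW_le_third 3 α)
    simp only [NW]; norm_num at this ⊢; linarith
  · have := sum_le (4/3) (by norm_num) (fun α _ => by simpa using nW_le_third 4 α)
    simp only [NW]; norm_num at this ⊢; linarith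
  · have := sum_le (5/3) (by norm_num) (fun α _ => by simpa using nW_le_third 5 α)
    simp only [NW]; norm_num at this ⊢; linarith
  · -- i = 6 : special case
    have hNW : NW 6 = 18 := by norm_num [NW]
    rw [hNW]
    by_cases hmem : ({7, 8, 9} : Finset ℕ) ∈ M₀
    · rw [← Finset.sum_erase_add M₀ _ hmem]
      have hb : ∀ α ∈ M₀.erase ({7, 8, 9} : Finset ℕ), nW 6 α ≤ 1 := by
        intro α hα
        exact nW6_lt_two (hsub (Finset.mem_of_mem_erase hα)) (Finset.ne_of_mem_erase hα)
      have h1 : (∑ α ∈ M₀.erase ({7, 8, 9} : Finset ℕ), nW 6 α) ≤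
          ((M₀.erase ({7, 8, 9} : Finset ℕ)).card : ℝ) * 1 := by
        calc _ ≤ ∑ _α ∈ M₀.erase ({7, 8, 9} : Finset ℕ), (1 : ℝ) := Finset.sum_le_sum hb
          _ = _ := by rw [Finset.sum_const, nsmul_eq_mul]
      have hce : (M₀.erase ({7, 8, 9} : Finset ℕ)).card ≤ 9 := by
        have := Finset.card_erase_of_mem hmem
        omega
      have hceR : ((M₀.erase ({7, 8, 9} : Finset ℕ)).card : ℝ) ≤ 9 := by exact_mod_cast hce
      have h2 : nW 6 ({7, 8, 9} : Finset ℕ) ≤ 2 := by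
        unfold nW
        have : (0 : ℝ) ≤ ((({7,8,9} : Finset ℕ).filter (fun x => x ≤ 6)).card : ℝ) :=
          Nat.cast_nonneg _
        norm_num
      linarith
    · have hb : ∀ α ∈ M₀, nW 6 α ≤ 1 := by
        intro α hα
        exact nW6_lt_two (hsub hα) (by rintro rfl; exact hmem hα)
      have := sum_le 1 (by norm_num) hb
      linarith
  · -- i = 7
    have hb : ∀ α ∈ M₀, nW 7 α ≤ 7/3 - 1 := by
      intro α hα
      have := filter_ge 7 (hsub hα)
      have := nW_le_of_card 7 1 (α := α) (by omega)
      simpa using this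
    have := sum_le (7/3 - 1) (by norm_num) hb
    simp only [NW]; norm_num at this ⊢; linarith
  · -- i = 8
    have hb : ∀ α ∈ M₀, nW 8 α ≤ 8/3 - 2 := by
      intro α hα
      have := filter_ge 8 (hsub hα)
      have := nW_le_of_card 8 2 (α := α) (by omega)
      simpa using this
    have := sum_le (8/3 - 2) (by norm_num) hb
    simp only [NW]; norm_num at this ⊢; linarith
end

section
/- If λ ∈ Λ satisfies B((1−w)λ, μ) ≡ 0 (mod 3) for every μ ∈ Λ, then λ ∈ (1−w)Λ. That is, the induced pairing on the coinvariants Λ/(1−w)Λ given by (λ, μ) ↦ B((1−w)λ, μ) mod 3 is non-degenerate. -/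
/-- Λ is a free ℤ-module of finite rank with a symmetric bilinear unimodular
form `B` (every homomorphism `Λ → ℤ` is `B(λ, ·)` for a unique `λ`), and `w` is a ℤ-linear map
preserving `B` with `w²x + wx + x = 0` for all `x`. If `B((1−w)λ, μ) ≡ 0 (mod 3)` for every
`μ`, then `λ ∈ (1−w)Λ`; i.e. the induced pairing on the coinvariants `Λ/(1−w)Λ` is
non-degenerate. -/
theorem stmt_9 (Λ : Type*) [AddCommGroup Λ] [Module.Free ℤ Λ] [Module.Finite ℤ Λ]
    (B : Λ → Λ → ℤ)
    (hB_add_left : ∀ x y z : Λ, B (x + y) z = B x z + B y z)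
    (hB_add_right : ∀ x y z : Λ, B x (y + z) = B x y + B x z)
    (hB_symm : ∀ x y : Λ, B x y = B y x)
    (hB_unimodular : ∀ φ : Λ →+ ℤ, ∃! l : Λ, ∀ m : Λ, B l m = φ m)
    (w : Λ →+ Λ)
    (hwB : ∀ x y : Λ, B (w x) (w y) = B x y)
    (hw_ell : ∀ x : Λ, w (w x) + w x + x = 0)
    (l : Λ) (hl : ∀ m : Λ, (3 : ℤ) ∣ B (l - w l) m) :
    ∃ ν : Λ, l = ν - w ν := by
  -- basic facts about B
  have hB0 : ∀ x : Λ, B x 0 = 0 := by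
    intro x
    have := hB_add_right x 0 0
    simpa using this
  -- the functional m ↦ B (l - w l) m / 3, additive
  have φadd : ∀ m m' : Λ, B (l - w l) (m + m') / 3
      = B (l - w l) m / 3 + B (l - w l) m' / 3 := by
    intro m m'
    obtain ⟨a, ha⟩ := hl m
    obtain ⟨b, hb⟩ := hl m'
    rw [hB_add_right, ha, hb, ← mul_add, Int.mul_ediv_cancel_left _ (by norm_num),
      Int.mul_ediv_cancel_left _ (by norm_num), Int.mul_ediv_cancel_left _ (by norm_num)]
  let φ : Λ →+ ℤ :=
    { toFun := fun m => B (l - w l) m / 3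
      map_zero' := by simp [hB0]
      map_add' := φadd }
  obtain ⟨μ, hμ, -⟩ := hB_unimodular φ
  have h3μ : ∀ m : Λ, B (μ + μ + μ) m = B (l - w l) m := by
    intro m
    have h := hμ m
    obtain ⟨a, ha⟩ := hl m
    have : φ m = a := by
      show B (l - w l) m / 3 = a
      rw [ha, Int.mul_ediv_cancel_left _ (by norm_num)]
    rw [hB_add_left, hB_add_left, h, this, ha]
    ring
  -- uniqueness ⇒ l - w l = 3 μ
  let ψ : Λ →+ ℤ :=
    { toFun := fun m => B (l - w l) m
      map_zero' := hB0 _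
      map_add' := fun m m' => hB_add_right _ m m' }
  obtain ⟨c, -, hcu⟩ := hB_unimodular ψ
  have e1 : (μ + μ + μ) = c := hcu _ (fun m => h3μ m)
  have e2 : l - w l = c := hcu _ (fun m => rfl)
  have key : l - w l = μ + μ + μ := by rw [e2, ← e1]
  -- w³ = 1
  have hw3 : ∀ x : Λ, w (w (w x)) = x := by
    intro x
    have h1 := hw_ell x
    have h2 := hw_ell (w x)
    have h3 : w (w (w x)) + w (w x) + w x = 0 := h2
    have : w (w (w x)) - x = (w (w (w x)) + w (w x) + w x) - (w (w x) + w x + x) := by abel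
    rw [h3, h1] at this
    simpa [sub_eq_zero] using this
  refine ⟨μ + w μ, ?_⟩
  -- x := l - (ν - w ν) satisfies w x = x hence 3x = 0 hence x = 0
  set ν : Λ := μ + w μ with hν
  have hνw : ν - w ν = μ - w (w μ) := by
    simp [hν, map_add]
    abel
  have hx : w (l - (ν - w ν)) = l - (ν - w ν) := by
    have h1 : w (ν - w ν) = w μ - μ := by rw [hνw, map_sub, hw3]
    have hwl : w l = l - (μ + μ + μ) := by
      have h : w l = l - (l - w l) := by abel
      rw [h, key]
    have hww : w (w μ) = -(w μ) - μ := by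
      have hell := hw_ell μ
      linear_combination (norm := abel_nf) hell
    rw [map_sub, h1, hwl, hνw, hww]
    abel
  set x : Λ := l - (ν - w ν) with hxdef
  have h3x : x + x + x = 0 := by
    have h1 := hw_ell x
    rw [hx] at h1
    rw [hx] at h1
    exact h1
  have hx0 : x = 0 := by
    have h3 : (3 : ℤ) • x = 0 := by
      have : (3 : ℤ) • x = x + x + x := by
        rw [show (3:ℤ) = 1 + 1 + 1 by norm_num, add_smul, add_smul, one_smul]
      rw [this, h3x]
    rcases smul_eq_zero.mp h3 with h | h
    · norm_num at h
    · exact h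
  have := hxdef ▸ hx0
  have : l = ν - w ν := by
    have h := sub_eq_zero.mp hx0
    exact h
  exact this
end

section
/- The rank n of Λ is even, and the coinvariants Λ/(w−1)Λ form a finite elementary abelian 3-group of order 3^{n/2}, i.e. Λ/(w−1)Λ ≅ (ℤ/3ℤ)^{n/2}. (In particular, for an elliptic automorphism of order 3 of the E₈ root lattice, the coinvariants are isomorphic to 𝔽₃⁴.) -/
open LinearMap Submodule

/-- Λ is a free ℤ-module of finite rank `n` and `w : Λ → Λ` is a ℤ-linear
endomorphism with `w²x + wx + x = 0` for all `x`. Then `n` is even and the coinvariants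
`Λ/(w−1)Λ` form an elementary abelian 3-group of order `3^(n/2)`, i.e.
`Λ/(w−1)Λ ≅ (ℤ/3ℤ)^(n/2)`. -/
theorem stmt_10 (Λ : Type*) [AddCommGroup Λ] [Module.Free ℤ Λ] [Module.Finite ℤ Λ]
    (w : Λ →ₗ[ℤ] Λ) (hw_ell : ∀ x : Λ, w (w x) + w x + x = 0) :
    ∃ m : ℕ, Module.finrank ℤ Λ = 2 * m ∧
      Nonempty ((Λ ⧸ LinearMap.range (w - LinearMap.id)) ≃+ (Fin m → ZMod 3)) := by
  classical
  set φ : Λ →ₗ[ℤ] Λ := w - LinearMap.id with hφdef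
  have hww : ∀ x, w (w x) = -(w x) - x := fun x =>
    eq_of_sub_eq_zero (by rw [← hw_ell x]; abel)
  set v : Λ →ₗ[ℤ] Λ := -(w + LinearMap.id) with hvdef
  have hwv : ∀ x, w (v x) = x := fun x => by
    simp [hvdef, map_add, map_neg, hww]
  have hvw : ∀ x, v (w x) = x := fun x => by
    simp [hvdef, hww]
  have hφ2 : ∀ x, φ (φ x) = (-3 : ℤ) • w x := fun x => by
    simp [hφdef, map_sub, hww]; abel
  have hφinj : Function.Injective φ := by
    intro x y hxy
    have h0 : φ (x - y) = 0 := by rw [map_sub, hxy, sub_self]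
    have h1 : (-3 : ℤ) • w (x - y) = 0 := by rw [← hφ2, h0, map_zero]
    have h2 : w (x - y) = 0 := by
      rcases smul_eq_zero.mp h1 with h | h
      · norm_num at h
      · exact h
    have := hvw (x - y)
    rw [h2, map_zero] at this
    exact sub_eq_zero.mp this.symm
  set K : Submodule ℤ Λ := LinearMap.range φ with hK
  set H : Submodule ℤ Λ := LinearMap.range (φ ∘ₗ φ) with hH
  have hHK : H ≤ K := by
    rintro y ⟨x, rfl⟩; exact ⟨φ x, rfl⟩
  have h3H : ∀ x : Λ, (3 : ℤ) • x ∈ H := by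
    intro x
    refine ⟨-(v x), ?_⟩
    simp only [LinearMap.comp_apply, map_neg, hφ2, hwv x]
    module
  have h3K : ∀ x : Λ, (3 : ℤ) • x ∈ K := fun x => hHK (h3H x)
  have hH3 : H = LinearMap.range ((3 : ℤ) • (LinearMap.id : Λ →ₗ[ℤ] Λ)) := by
    apply le_antisymm
    · rintro y ⟨x, rfl⟩
      refine ⟨-(w x), ?_⟩
      simp only [LinearMap.smul_apply, LinearMap.id_apply, LinearMap.comp_apply, hφ2]
      module
    · rintro y ⟨x, rfl⟩
      have := h3H x
      simpa only [LinearMap.smul_apply, LinearMap.id_apply] using this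
  -- identify Λ/H with (ι → ZMod 3)
  let ι := Module.Free.ChooseBasisIndex ℤ Λ
  let b : Module.Basis ι ℤ Λ := Module.Free.chooseBasis ℤ Λ
  let e1 : Λ ≃ₗ[ℤ] (ι → ℤ) := b.equivFun
  have hmap : H.map (e1 : Λ →ₗ[ℤ] (ι → ℤ))
      = LinearMap.range ((3 : ℤ) • (LinearMap.id : (ι → ℤ) →ₗ[ℤ] (ι → ℤ))) := by
    apply le_antisymm
    · rintro _ ⟨x, hx, rfl⟩
      rw [hH3] at hx
      obtain ⟨z, rfl⟩ := hx
      exact ⟨e1 z, by simp⟩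
    · rintro _ ⟨g, rfl⟩
      refine ⟨(3 : ℤ) • e1.symm g, h3H _, by simp⟩
  have hpi : LinearMap.range ((3 : ℤ) • (LinearMap.id : (ι → ℤ) →ₗ[ℤ] (ι → ℤ)))
      = Submodule.pi Set.univ (fun _ : ι => LinearMap.range ((3 : ℤ) • (LinearMap.id : ℤ →ₗ[ℤ] ℤ))) := by
    apply le_antisymm
    · rintro _ ⟨g, rfl⟩ i _
      exact ⟨g i, by simp⟩
    · intro f hf
      choose g hg using fun i => hf i (Set.mem_univ i)
      refine ⟨g, ?_⟩
      funext i
      simpa using hg i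
  have ezmod : (ℤ ⧸ LinearMap.range ((3 : ℤ) • (LinearMap.id : ℤ →ₗ[ℤ] ℤ))) ≃+ ZMod 3 := by
    have hsp : LinearMap.range ((3 : ℤ) • (LinearMap.id : ℤ →ₗ[ℤ] ℤ))
        = Ideal.span {((3 : ℕ) : ℤ)} := by
      ext x
      simp only [LinearMap.mem_range, LinearMap.smul_apply, LinearMap.id_apply, smul_eq_mul,
        Ideal.mem_span_singleton, Nat.cast_ofNat, dvd_def]
      exact ⟨fun ⟨y, h⟩ => ⟨y, h.symm⟩, fun ⟨c, h⟩ => ⟨c, h.symm⟩⟩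
    exact (Submodule.quotEquivOfEq _ _ hsp).toAddEquiv.trans
      (Int.quotientSpanNatEquivZMod 3).toAddEquiv
  have eH : (Λ ⧸ H) ≃+ (ι → ZMod 3) :=
    ((Submodule.Quotient.equiv H _ e1 rfl).toAddEquiv).trans
      (((Submodule.quotEquivOfEq _ _ (hmap.trans hpi)).toAddEquiv).trans
        (((Submodule.quotientPi _).toAddEquiv).trans
          (AddEquiv.piCongrRight fun _ => ezmod)))
  have hcardH : Nat.card (Λ ⧸ H) = 3 ^ Module.finrank ℤ Λ := by
    rw [Nat.card_congr eH.toEquiv, Module.finrank_eq_card_chooseBasisIndex ℤ Λ]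
    simp [Nat.card_eq_fintype_card]
    exact Fintype.card_congr (Equiv.refl _)
  -- multiplicativity: card(Λ/H) = card(Λ/K)^2
  have hle : H ≤ Submodule.comap (LinearMap.id : Λ →ₗ[ℤ] Λ) K := fun x hx => hHK hx
  let π : (Λ ⧸ H) →ₗ[ℤ] (Λ ⧸ K) := Submodule.mapQ H K LinearMap.id hle
  have hπsurj : Function.Surjective π := by
    intro y
    obtain ⟨x, rfl⟩ := K.mkQ_surjective y
    exact ⟨H.mkQ x, by simp [π, Submodule.mapQ_apply]⟩
  let ρ : Λ →ₗ[ℤ] (Λ ⧸ H) := H.mkQ ∘ₗ φ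
  have hkerρ : LinearMap.ker ρ = K := by
    ext x
    simp only [ρ, LinearMap.mem_ker, LinearMap.comp_apply, Submodule.mkQ_apply,
      Submodule.Quotient.mk_eq_zero, hK, hH]
    constructor
    · rintro ⟨y, hy⟩
      exact ⟨y, hφinj hy⟩
    · rintro ⟨y, rfl⟩
      exact ⟨y, rfl⟩
  have hrangeρ : LinearMap.range ρ = LinearMap.ker π := by
    apply le_antisymm
    · rintro _ ⟨x, rfl⟩
      simp only [LinearMap.mem_ker, ρ, LinearMap.comp_apply, Submodule.mkQ_apply, π,
        Submodule.mapQ_apply, LinearMap.id_apply, Submodule.Quotient.mk_eq_zero]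
      exact ⟨x, rfl⟩
    · intro q hq
      obtain ⟨y, rfl⟩ := H.mkQ_surjective q
      simp only [LinearMap.mem_ker, π, Submodule.mkQ_apply, Submodule.mapQ_apply,
        LinearMap.id_apply, Submodule.Quotient.mk_eq_zero] at hq
      obtain ⟨x, rfl⟩ := hq
      exact ⟨x, rfl⟩
  have eKker : (Λ ⧸ K) ≃ₗ[ℤ] (LinearMap.ker π) :=
    (Submodule.quotEquivOfEq K (LinearMap.ker ρ) hkerρ.symm).trans
      ((LinearMap.quotKerEquivRange ρ).trans (LinearEquiv.ofEq _ _ hrangeρ))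
  have hmul := AddSubgroup.card_eq_card_quotient_mul_card_addSubgroup (LinearMap.ker π).toAddSubgroup
  have hq1 : Nat.card ((Λ ⧸ H) ⧸ (LinearMap.ker π).toAddSubgroup) = Nat.card (Λ ⧸ K) :=
    Nat.card_congr (LinearMap.quotKerEquivOfSurjective π hπsurj).toEquiv
  have hq2 : Nat.card (LinearMap.ker π).toAddSubgroup = Nat.card (LinearMap.ker π) := rfl
  have ha2 : Nat.card (Λ ⧸ K) * Nat.card (Λ ⧸ K) = 3 ^ Module.finrank ℤ Λ := by
    rw [← hcardH, hmul, hq1, hq2, Nat.card_congr eKker.toEquiv]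
  -- extract k with card = 3^k
  have hdvd : Nat.card (Λ ⧸ K) ∣ 3 ^ Module.finrank ℤ Λ := ⟨Nat.card (Λ ⧸ K), ha2.symm⟩
  obtain ⟨k, hkle, hak⟩ := (Nat.dvd_prime_pow (by norm_num)).mp hdvd
  have hnk : k + k = Module.finrank ℤ Λ := by
    apply Nat.pow_right_injective (show 2 ≤ 3 by norm_num)
    show (3 : ℕ) ^ (k + k) = 3 ^ Module.finrank ℤ Λ
    rw [pow_add, ← hak, ha2]
  have hfin : Finite (Λ ⧸ K) := Nat.finite_of_card_ne_zero (by rw [hak]; positivity)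
  have h3Q : ∀ q : (Λ ⧸ K), (3 : ℕ) • q = 0 := by
    intro q
    obtain ⟨x, rfl⟩ := K.mkQ_surjective q
    rw [← map_nsmul, Submodule.mkQ_apply, Submodule.Quotient.mk_eq_zero]
    have := h3K x
    rwa [show ((3 : ℤ) • x = (3 : ℕ) • x) from natCast_zsmul x 3 ▸ rfl] at this
  letI : Module (ZMod 3) (Λ ⧸ K) := AddCommGroup.zmodModule h3Q
  letI : Module.Finite (ZMod 3) (Λ ⧸ K) := Module.Finite.of_finite
  let bQ := Module.finBasis (ZMod 3) (Λ ⧸ K)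
  have eQ : (Λ ⧸ K) ≃+ (Fin (Module.finrank (ZMod 3) (Λ ⧸ K)) → ZMod 3) := bQ.equivFun.toAddEquiv
  have hcard' : Nat.card (Λ ⧸ K) = 3 ^ Module.finrank (ZMod 3) (Λ ⧸ K) := by
    rw [Nat.card_congr eQ.toEquiv]
    simp [Nat.card_eq_fintype_card]
  have hm'k : Module.finrank (ZMod 3) (Λ ⧸ K) = k := by
    apply Nat.pow_right_injective (show 2 ≤ 3 by norm_num)
    show (3 : ℕ) ^ _ = 3 ^ k
    rw [← hcard', hak]
  refine ⟨Module.finrank (ZMod 3) (Λ ⧸ K), by omega, ⟨eQ⟩⟩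
end

section
/- The map λ ↦ (1−w)λ mod 3Λ induces a group isomorphism from the coinvariants Λ/(1−w)Λ onto the w-fixed subgroup {x ∈ Λ/3Λ : w̄x = x} of Λ/3Λ, where w̄ is the endomorphism induced by w on Λ/3Λ. -/
/-- Λ is a free ℤ-module of finite rank and `w : Λ → Λ` is a ℤ-linear
endomorphism with `w²x + wx + x = 0` for all `x`. The map `λ ↦ (1−w)λ mod 3Λ` induces a
group isomorphism from the coinvariants `Λ/(1−w)Λ` onto the `w`-fixed subgroup
`{x ∈ Λ/3Λ : w̄x = x}` of `Λ/3Λ`: there is an injective additive map `f` on the coinvariants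
with `f(λ mod (1−w)Λ) = (λ − wλ) mod 3Λ` whose range is exactly the set of classes fixed by
the endomorphism induced by `w`. -/
theorem stmt_11 (Λ : Type*) [AddCommGroup Λ] [Module.Free ℤ Λ] [Module.Finite ℤ Λ]
    (w : Λ →ₗ[ℤ] Λ) (hw_ell : ∀ x : Λ, w (w x) + w x + x = 0) :
    ∃ f : (Λ ⧸ LinearMap.range (LinearMap.id - w)) →+
        (Λ ⧸ LinearMap.range ((3 : ℤ) • (LinearMap.id : Λ →ₗ[ℤ] Λ))),
      (∀ l : Λ, f (Submodule.Quotient.mk l) = Submodule.Quotient.mk (l - w l)) ∧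
      Function.Injective f ∧
      Set.range f = {x : Λ ⧸ LinearMap.range ((3 : ℤ) • (LinearMap.id : Λ →ₗ[ℤ] Λ)) |
        ∀ l : Λ, Submodule.Quotient.mk l = x →
          (Submodule.Quotient.mk (w l) :
            Λ ⧸ LinearMap.range ((3 : ℤ) • (LinearMap.id : Λ →ₗ[ℤ] Λ))) = x} := by
  have hww : ∀ x : Λ, w (w x) = -(w x) - x := by
    intro x
    have h : w (w x) + (w x + x) = 0 := by rw [← add_assoc]; exact hw_ell x
    rw [eq_neg_of_add_eq_zero_left h]; abel
  have htf : ∀ x : Λ, (3 : ℤ) • x = 0 → x = 0 := by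
    intro x hx
    rcases smul_eq_zero.mp hx with h | h
    · norm_num at h
    · exact h
  set N3 : Submodule ℤ Λ := LinearMap.range ((3 : ℤ) • (LinearMap.id : Λ →ₗ[ℤ] Λ)) with hN3
  have hmem : ∀ y : Λ, y ∈ N3 ↔ ∃ m : Λ, (3 : ℤ) • m = y := by
    intro y
    constructor
    · rintro ⟨m, rfl⟩; exact ⟨m, rfl⟩
    · rintro ⟨m, rfl⟩; exact ⟨m, rfl⟩
  set g : Λ →ₗ[ℤ] Λ ⧸ N3 := N3.mkQ.comp (LinearMap.id - w) with hg
  have hker : LinearMap.range (LinearMap.id - w) ≤ LinearMap.ker g := by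
    rintro _ ⟨m, rfl⟩
    simp only [LinearMap.mem_ker, hg, LinearMap.comp_apply, LinearMap.sub_apply,
      LinearMap.id_apply, Submodule.mkQ_apply, Submodule.Quotient.mk_eq_zero]
    refine (hmem _).mpr ⟨-(w m), ?_⟩
    rw [map_sub, hww]
    abel
  set F := (LinearMap.range (LinearMap.id - w)).liftQ g hker with hF
  have hf : ∀ l : Λ, F (Submodule.Quotient.mk l) = Submodule.Quotient.mk (l - w l) := by
    intro l
    rw [hF, Submodule.liftQ_apply]
    simp [hg]
  refine ⟨F.toAddMonoidHom, hf, ?_, ?_⟩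
  · rw [injective_iff_map_eq_zero]
    intro a ha
    obtain ⟨l, rfl⟩ := Submodule.Quotient.mk_surjective _ a
    simp only [LinearMap.toAddMonoidHom_coe] at ha
    rw [hf, Submodule.Quotient.mk_eq_zero] at ha
    obtain ⟨m, hm⟩ := (hmem _).mp ha
    rw [Submodule.Quotient.mk_eq_zero]
    have h4 := congrArg w hm
    rw [map_smul, map_sub, hww] at h4
    have key : (3 : ℤ) • (m + w m - w (m + w m) - l) = 0 := by
      rw [map_add, hww]
      simp only [smul_sub, smul_add, smul_neg]
      rw [hm, h4]
      abel
    refine ⟨m + w m, ?_⟩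
    simp only [LinearMap.sub_apply, LinearMap.id_apply]
    have := htf _ key
    rwa [sub_eq_zero] at this
  · ext x
    simp only [Set.mem_range, Set.mem_setOf_eq]
    constructor
    · rintro ⟨a, rfl⟩
      obtain ⟨l, rfl⟩ := Submodule.Quotient.mk_surjective _ a
      simp only [LinearMap.toAddMonoidHom_coe]
      rw [hf]
      intro l' hl'
      obtain ⟨m, hm⟩ := (hmem _).mp ((Submodule.Quotient.eq _).mp hl')
      rw [Submodule.Quotient.eq]
      refine (hmem _).mpr ⟨w m + w l, ?_⟩
      have h4 := congrArg w hm
      rw [map_smul, map_sub, map_sub, hww] at h4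
      rw [smul_add, h4]
      abel
    · intro hx
      obtain ⟨l, rfl⟩ := Submodule.Quotient.mk_surjective _ x
      have h1 := hx l rfl
      obtain ⟨m, hm⟩ := (hmem _).mp ((Submodule.Quotient.eq _).mp h1)
      refine ⟨Submodule.Quotient.mk m, ?_⟩
      simp only [LinearMap.toAddMonoidHom_coe]
      rw [hf]
      have h4 := congrArg w hm
      rw [map_smul, map_sub, hww] at h4
      have key : (3 : ℤ) • (m - w m - w l) = 0 := by
        simp only [smul_sub]
        rw [hm, h4]
        abel
      have heq : m - w m = w l := by
        have := htf _ key
        rwa [sub_sub, sub_eq_zero, ← sub_eq_iff_eq_add'] at this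
      rw [heq]
      exact h1
end
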